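/- arXiv:2211.02993 — 6 statements merged into one kernel-verified Lean document; each statement's English description precedes it below -/
import Mathlib

section
/- If P is a decreasing tableau and x is a P-ejectable value, then row(P) is Hecke-equivalent to row(P)·x, i.e., appending x to the row reading word of P does not change its class in the 0-Hecke monoid. -/
/-- Elementary 0-Hecke relations on words. -/
inductive HeckeRel : List ℕ → List ℕ → Prop
  | idem (i : ℕ) : HeckeRel [i, i] [i]
  | braid (i : ℕ) : HeckeRel [i, i+1, i] [i+1, i, i+1]
  | comm (i j : ℕ) (h : i + 2 ≤ j ∨ j + 2 ≤ i) : HeckeRel [i, j] [j, i]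

/-- Hecke equivalence: the congruence on words generated by the 0-Hecke relations. -/
inductive HeckeEquiv : List ℕ → List ℕ → Prop
  | of {a b : List ℕ} : HeckeRel a b → HeckeEquiv a b
  | refl (a : List ℕ) : HeckeEquiv a a
  | symm {a b : List ℕ} : HeckeEquiv a b → HeckeEquiv b a
  | trans {a b c : List ℕ} : HeckeEquiv a b → HeckeEquiv b c → HeckeEquiv a c
  | append_congr {a b c d : List ℕ} :
      HeckeEquiv a b → HeckeEquiv c d → HeckeEquiv (a ++ c) (b ++ d)

/-- The permutation of `ℕ` associated to a word (letter `i` ↦ the simple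
transposition swapping `i` and `i+1`). -/
def wordPerm (a : List ℕ) : Equiv.Perm ℕ := (a.map fun i => Equiv.swap i (i + 1)).prod

/-- A word on the alphabet of positive integers. -/
def IsPosWord (a : List ℕ) : Prop := ∀ x ∈ a, 0 < x

/-- `a` is a reduced word of the permutation `w`: it represents `w` and has
minimum length among words representing `w`. -/
def IsReducedWordOf (w : Equiv.Perm ℕ) (a : List ℕ) : Prop :=
  IsPosWord a ∧ wordPerm a = w ∧
    ∀ b : List ℕ, IsPosWord b → wordPerm b = w → a.length ≤ b.length

/-- `a` is a Hecke word for `w`: it is Hecke-equivalent to a reduced word of `w`. -/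
def IsHeckeWord (w : Equiv.Perm ℕ) (a : List ℕ) : Prop :=
  IsPosWord a ∧ ∃ b, IsReducedWordOf w b ∧ HeckeEquiv a b

/-- A word is reduced if it has minimum length in its Hecke-equivalence class. -/
def IsReducedWord (a : List ℕ) : Prop := ∀ b, HeckeEquiv a b → a.length ≤ b.length

/-- The `i`-th row (1-indexed) of a tableau presented as a list of rows. -/
def RowOf (T : List (List ℕ)) (i : ℕ) : List ℕ := T.getD (i - 1) []

/-- A decreasing tableau: nonempty rows of positive integers of weakly decreasing
lengths, strictly decreasing along rows and down columns. -/
def IsDecreasingTableau (T : List (List ℕ)) : Prop :=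
  (∀ R ∈ T, R ≠ []) ∧
  (∀ R ∈ T, ∀ x ∈ R, 0 < x) ∧
  (∀ R ∈ T, R.Chain' (fun x y => y < x)) ∧
  T.Chain' (fun R S => S.length ≤ R.length ∧ ∀ j < S.length, S.getD j 0 < R.getD j 0)

/-- The shape of a tableau: the list of its row lengths. -/
def shape (T : List (List ℕ)) : List ℕ := T.map List.length

/-- `(r,c)` (1-indexed, matrix style) is a removable cell of `T`: the cell at the
end of row `r` and at the bottom of column `c`. -/
def IsRemovable (T : List (List ℕ)) (r c : ℕ) : Prop :=
  1 ≤ r ∧ r ≤ T.length ∧ 1 ≤ c ∧ (RowOf T r).length = c ∧ (RowOf T (r + 1)).length < c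

/-- Ejectability (recursive): `x` is ejectable in `T` if `x` is in the first row of
`T` and either `x-1` is not in the first row, or it is and `x-1` is ejectable in
the tableau with the first row removed. -/
def Ejectable : List (List ℕ) → ℕ → Prop
  | [], _ => False
  | R :: rest, x => x ∈ R ∧ (x - 1 ∉ R ∨ Ejectable rest (x - 1))

/-- Boolean version of ejectability, used inside the algorithms. -/
def ejectableB : List (List ℕ) → ℕ → Bool
  | [], _ => false
  | R :: rest, x => R.contains x && (!(R.contains (x - 1)) || ejectableB rest (x - 1))

/-- Smallest ejectable value `x` in `T` with `lo < x < hi`, if any. -/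
def smallestEjectableBetween (T : List (List ℕ)) (lo hi : ℕ) : Option ℕ :=
  ((T.headD []).filter fun x => ejectableB T x && decide (lo < x) && decide (x < hi)).min?

/-- Largest ejectable value `x` in `T` with `lo < x < hi`, if any. -/
def largestEjectableBetween (T : List (List ℕ)) (lo hi : ℕ) : Option ℕ :=
  ((T.headD []).filter fun x => ejectableB T x && decide (lo < x) && decide (x < hi)).max?

/-- Replace all occurrences of `old` by `new` in a row. -/
def replaceVal (R : List ℕ) (old new : ℕ) : List ℕ :=
  R.map fun y => if y = old then new else y

/-- One step of the reverse insertion Ψ at a row `R`, given the already-processed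
lower tableau `B = P'_{>i}`, the value `m1 = m_{i+1}` and flag `a1 = α_{i+1}`.
Returns the new row, the value `m_i` and the flag `α_i`. -/
def psiRowStep (R : List ℕ) (B : List (List ℕ)) (m1 : ℕ) (a1 : Bool) :
    List ℕ × ℕ × Bool :=
  let mi := ((R.filter fun y => decide (m1 < y)).min?).getD 0
  if R.contains (mi - 1) then (R, mi, a1)                        -- Dummy
  else if a1 && !(R.contains m1) then (replaceVal R mi m1, mi, true)  -- Direct Repl.
  else
    match smallestEjectableBetween B m1 mi with
    | some x => (replaceVal R mi x, mi, true)                    -- Indirect Repl.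
    | none => (R, mi, false)                                     -- No Replacement

/-- Process a list of rows (top part of the tableau) from bottom to top, on top of
the already-processed lower tableau `B`, with initial ejected value `m` and flag `a`.
Returns the full processed tableau together with the last ejected value and flag. -/
def psiRows : List (List ℕ) → List (List ℕ) → ℕ → Bool → List (List ℕ) × ℕ × Bool
  | [], B, m, a => (B, m, a)
  | R :: rest, B, m, a =>
    let s := psiRows rest B m a
    let t := psiRowStep R s.1 s.2.1 s.2.2
    (t.1 :: s.1, t.2.1, t.2.2)

/-- The part of the tableau below the processed rows, after the initialization step
of Ψ (for `α = 1` the removable cell at the end of row `r` is deleted). -/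
def psiBase (P : List (List ℕ)) (r : ℕ) (α : Bool) : List (List ℕ) :=
  if α then
    (if (RowOf P r).dropLast = [] then P.drop r else (RowOf P r).dropLast :: P.drop r)
  else P.drop r

/-- The rows of `P` to be processed by Ψ. -/
def psiUpper (P : List (List ℕ)) (r : ℕ) (α : Bool) : List (List ℕ) :=
  if α then P.take (r - 1) else P.take r

/-- The initial value `m_{r+1}` (for `α = 0`) or `m_r` (for `α = 1`) fed to Ψ. -/
def psiM (P : List (List ℕ)) (r : ℕ) (α : Bool) : ℕ :=
  if α then ((RowOf P r).getLast?).getD 0 else 0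

/-- The state of the reverse insertion Ψ on `(P, (r,·), α)` after processing row `i`:
the working tableau restricted to rows `≥ i` (i.e. `P'_{≥ i}`), the value `m_i`
ejected from row `i`, and the flag `α_i`. -/
def psiStage (P : List (List ℕ)) (r : ℕ) (α : Bool) (i : ℕ) :
    List (List ℕ) × ℕ × Bool :=
  psiRows ((psiUpper P r α).drop (i - 1)) (psiBase P r α) (psiM P r α) α

/-- The reverse insertion Ψ: input a decreasing tableau `P`, the row index `r` of a
removable cell, and `α ∈ {0,1}`; output the new tableau `P'` and the value `m`. -/
def psi (P : List (List ℕ)) (r : ℕ) (α : Bool) : List (List ℕ) × ℕ :=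
  ((psiStage P r α 1).1, (psiStage P r α 1).2.1)

/-- The forward insertion of a value `N` into a tableau (list of rows, processed
top-down). Returns the new tableau, the row and column (1-indexed) of the
terminating cell, and the flag `α`. -/
def phiRows : ℕ → List (List ℕ) → List (List ℕ) × ℕ × ℕ × Bool
  | N, [] => ([[N]], 1, 1, true)                                   -- T1 (new row)
  | N, R :: rest =>
    match (R.filter fun y => decide (y ≤ N)).max? with
    | none => ((R ++ [N]) :: rest, 1, R.length + 1, true)          -- T1 (append)
    | some n1 =>
      let R' := replaceVal R n1 N
      let j := R.idxOf n1
      let n2 := R.getD (j + 1) 0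
      if n1 = N && R.contains (N - 1) then                         -- Dummy
        let o := phiRows (N - 1) rest
        (R' :: o.1, o.2.1 + 1, o.2.2.1, o.2.2.2)
      else if decide (n1 < N) && !(ejectableB rest n1) then        -- Direct Repl.
        let o := phiRows n1 rest
        (R' :: o.1, o.2.1 + 1, o.2.2.1, o.2.2.2)
      else
        match largestEjectableBetween rest n2 n1 with
        | some y =>                                                -- IR1
          let o := phiRows y rest
          (R' :: o.1, o.2.1 + 1, o.2.2.1, o.2.2.2)
        | none =>
          if n2 = 0 then (R' :: rest, 1, j + 1, false)             -- T2
          else                                                     -- IR2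
            let o := phiRows n2 rest
            (R' :: o.1, o.2.1 + 1, o.2.2.1, o.2.2.2)

/-- The forward insertion Φ of `m` into the decreasing tableau `P`. -/
def phi (P : List (List ℕ)) (m : ℕ) : List (List ℕ) × ℕ × ℕ × Bool := phiRows m P

/-- Edelman–Greene reverse row insertion: process rows bottom-to-top, always
replacing `m_i` by `m_{i+1}`. -/
def egRows : List (List ℕ) → List (List ℕ) → ℕ → List (List ℕ) × ℕ
  | [], B, m => (B, m)
  | R :: rest, B, m =>
    let s := egRows rest B m
    let mi := ((R.filter fun y => decide (s.2 < y)).min?).getD 0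
    (replaceVal R mi s.2 :: s.1, mi)

/-- EG reverse row insertion at the removable cell in row `r` of `P`. -/
def egRev (P : List (List ℕ)) (r : ℕ) : List (List ℕ) × ℕ :=
  egRows (P.take (r - 1)) (psiBase P r true) (psiM P r true)

/-- The row reading word: rows from bottom to top, each left to right. -/
def rowWord (T : List (List ℕ)) : List ℕ := T.reverse.flatten

/-- The shape obtained by removing the cell at the end of row `r` (1-indexed). -/
def shapeMinus (sh : List ℕ) (r : ℕ) : List ℕ :=
  (sh.set (r - 1) (sh.getD (r - 1) 0 - 1)).filter fun n => decide (n ≠ 0)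

/-- The shape obtained by adding one cell at the end of row `r` (1-indexed). -/
def shapePlus (sh : List ℕ) (r : ℕ) : List ℕ :=
  if r ≤ sh.length then sh.set (r - 1) (sh.getD (r - 1) 0 + 1) else sh ++ [1]

/-- The bumping path of the removable cell `(r,c)` of `T`: `m r` is the entry at
`(r,c)`, and for `1 ≤ i < r`, `m i` is the smallest entry of row `i` of `T`
exceeding `m (i+1)`. -/
def IsBumpingPath (T : List (List ℕ)) (r c : ℕ) (m : ℕ → ℕ) : Prop :=
  m r = (RowOf T r).getD (c - 1) 0 ∧
  ∀ i, 1 ≤ i → i < r →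
    m i ∈ RowOf T i ∧ m (i + 1) < m i ∧ ∀ y ∈ RowOf T i, m (i + 1) < y → m i ≤ y

/-- A compatible pair of words `(a, i)`: same length, positive letters, `i` weakly
decreasing, and equal consecutive `i`-letters force strictly increasing `a`-letters. -/
def CompatiblePair (a i : List ℕ) : Prop :=
  a.length = i.length ∧ IsPosWord a ∧ IsPosWord i ∧
    (i.zip a).Chain' fun p q => q.1 ≤ p.1 ∧ (p.1 = q.1 → p.2 < q.2)

/-- A set-valued tableau (of partition shape, presented as a list of rows of
finite sets): nonempty sets of positive integers, `max ≤ min` along rows,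
`max < min` down columns. -/
def IsSVT (Q : List (List (Finset ℕ))) : Prop :=
  (∀ R ∈ Q, R ≠ []) ∧
  Q.Chain' (fun R S => S.length ≤ R.length) ∧
  (∀ R ∈ Q, ∀ S ∈ R, S.Nonempty ∧ ∀ x ∈ S, 0 < x) ∧
  (∀ R ∈ Q, R.Chain' fun S S' => ∀ x ∈ S, ∀ y ∈ S', x ≤ y) ∧
  Q.Chain' fun R S => ∀ j < S.length, ∀ x ∈ R.getD j ∅, ∀ y ∈ S.getD j ∅, x < y

/-- Record the value `k` in the recording tableau `Q` at cell `(r,c)`: in a new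
cell if `newCell = true`, otherwise adding `k` to the set already there. -/
def recordCell (Q : List (List (Finset ℕ))) (r c k : ℕ) (newCell : Bool) :
    List (List (Finset ℕ)) :=
  if newCell then
    (if r ≤ Q.length then Q.set (r - 1) (Q.getD (r - 1) [] ++ [{k}]) else Q ++ [[{k}]])
  else
    Q.set (r - 1)
      ((Q.getD (r - 1) []).set (c - 1) (insert k ((Q.getD (r - 1) []).getD (c - 1) ∅)))

/-- The insertion correspondence: insert the letters of `a` successively by Φ,
recording the insertion of `a_k` with the value `i_k`. -/
def tildePhi (a i : List ℕ) : List (List ℕ) × List (List (Finset ℕ)) :=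
  ((a.zip i).reverse).foldl
    (fun PQ x =>
      let o := phi PQ.1 x.1
      (o.1, recordCell PQ.2 o.2.1 o.2.2.1 x.2 o.2.2.2))
    ([], [])

/-- The weight (multiset of entries) of a set-valued tableau. -/
def svtWeight (Q : List (List (Finset ℕ))) : Multiset ℕ :=
  (Q.flatten.map Finset.val).sum

lemma HeckeEquiv.congr {a b a' b' : List ℕ} (h : HeckeEquiv a b)
    (ha : a = a') (hb : b = b') : HeckeEquiv a' b' := ha ▸ hb ▸ h

lemma heq_cons_comm (x : ℕ) (l : List ℕ) (h : ∀ y ∈ l, y + 2 ≤ x) :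
    HeckeEquiv (l ++ [x]) (x :: l) := by
  induction l with
  | nil => exact .refl _
  | cons y t ih =>
    have h1 : HeckeEquiv ([y] ++ (t ++ [x])) ([y] ++ (x :: t)) :=
      .append_congr (.refl [y]) (ih fun z hz => h z (List.mem_cons_of_mem _ hz))
    have h2 : HeckeEquiv ([y, x] ++ t) ([x, y] ++ t) :=
      .append_congr (.of (.comm y x (Or.inl (h y (List.mem_cons_self))))) (.refl t)
    exact .trans h1 h2

lemma lemA (x : ℕ) (A B : List ℕ) (hB : ∀ y ∈ B, y + 2 ≤ x) :
    HeckeEquiv (A ++ x :: B) ((A ++ x :: B) ++ [x]) := by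
  have h1 : HeckeEquiv (A ++ (x :: (B ++ [x]))) (A ++ (x :: (x :: B))) :=
    .append_congr (.refl A)
      (HeckeEquiv.append_congr (.refl [x]) (heq_cons_comm x B hB))
  have h2 : HeckeEquiv (A ++ ([x, x] ++ B)) (A ++ ([x] ++ B)) :=
    .append_congr (.refl A) (.append_congr (.of (.idem x)) (.refl B))
  exact .symm (.trans (h1.congr (by simp) rfl) h2)

lemma heq_cons_comm' (x : ℕ) (l : List ℕ) (h : ∀ y ∈ l, x + 2 ≤ y) :
    HeckeEquiv (x :: l) (l ++ [x]) := by
  induction l with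
  | nil => exact .refl _
  | cons y t ih =>
    have h2 : HeckeEquiv ([x, y] ++ t) ([y, x] ++ t) :=
      .append_congr (.of (.comm x y (Or.inl (h y (List.mem_cons_self))))) (.refl t)
    have h1 : HeckeEquiv ([y] ++ (x :: t)) ([y] ++ (t ++ [x])) :=
      .append_congr (.refl [y]) (ih fun z hz => h z (List.mem_cons_of_mem _ hz))
    exact .trans h2 h1

lemma lemB (x : ℕ) (A D : List ℕ) (hx : 1 ≤ x)
    (hA : ∀ a ∈ A, x < a) (hD : ∀ d ∈ D, d + 2 ≤ x) :
    HeckeEquiv ((x-1) :: (A ++ x :: (x-1) :: D))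
      ((A ++ x :: (x-1) :: D) ++ [x]) := by
  have s1 : HeckeEquiv (((x-1) :: A) ++ (x :: (x-1) :: D))
      ((A ++ [x-1]) ++ (x :: (x-1) :: D)) := by
    refine .append_congr (heq_cons_comm' (x-1) A ?_) (.refl _)
    intro a ha; have := hA a ha; omega
  have s2 : HeckeEquiv (A ++ ([x-1, x, x-1] ++ D)) (A ++ ([x, x-1, x] ++ D)) := by
    refine .append_congr (.refl A) (.append_congr (.of ?_) (.refl D))
    have hb := HeckeRel.braid (x-1)
    have hxx : x - 1 + 1 = x := by omega
    rwa [hxx] at hb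
  have s3 : HeckeEquiv ((A ++ [x, x-1]) ++ ([x] ++ D))
      ((A ++ [x, x-1]) ++ (D ++ [x])) :=
    .append_congr (.refl _) (.symm (heq_cons_comm x D hD))
  refine HeckeEquiv.congr (a := (x-1) :: A ++ x :: (x-1) :: D)
    (b := A ++ x :: (x-1) :: (D ++ [x])) ?_ rfl (by simp)
  exact (s1.congr rfl (by simp [List.append_assoc])).trans
    (s2.trans (s3.congr (by simp) (by simp)))

lemma decTail {R : List ℕ} {rest : List (List ℕ)}
    (h : IsDecreasingTableau (R :: rest)) : IsDecreasingTableau rest := by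
  obtain ⟨h1, h2, h3, h4⟩ := h
  exact ⟨fun S hS => h1 S (List.mem_cons_of_mem _ hS),
    fun S hS => h2 S (List.mem_cons_of_mem _ hS),
    fun S hS => h3 S (List.mem_cons_of_mem _ hS), h4.tail⟩

lemma rowCase1 (R : List ℕ) (x : ℕ) (hc : R.Chain' fun a b => b < a)
    (hx : x ∈ R) (hx1 : x - 1 ∉ R) : HeckeEquiv R (R ++ [x]) := by
  have hp : R.Pairwise fun a b => b < a := List.isChain_iff_pairwise.mp hc
  obtain ⟨A, B, rfl⟩ := List.append_of_mem hx
  have hB0 : ∀ b ∈ B, b < x :=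
    (List.pairwise_cons.mp
      (List.Pairwise.sublist (List.sublist_append_right A (x :: B)) hp)).1
  refine lemA x A B fun b hb => ?_
  have h1 := hB0 b hb
  have h2 : b ≠ x - 1 := fun h => hx1 (h ▸ (by simp [hb]))
  omega

lemma rowCase2 (R : List ℕ) (x : ℕ) (hc : R.Chain' fun a b => b < a)
    (hx : x ∈ R) (hx1 : x - 1 ∈ R) (hpos : 0 < x) :
    HeckeEquiv ((x - 1) :: R) (R ++ [x]) := by
  have hp : R.Pairwise fun a b => b < a := List.isChain_iff_pairwise.mp hc
  obtain ⟨A, B, rfl⟩ := List.append_of_mem hx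
  obtain ⟨pA, pxB, hcross⟩ := List.pairwise_append.mp hp
  have hA : ∀ a ∈ A, x < a := fun a ha => hcross a ha x (List.mem_cons_self)
  have hB0 : ∀ b ∈ B, b < x := (List.pairwise_cons.mp pxB).1
  have hx1B : x - 1 ∈ B := by
    rcases List.mem_append.mp hx1 with h | h
    · exact absurd (hA _ h) (by omega)
    · rcases List.mem_cons.mp h with h | h
      · omega
      · exact h
  obtain ⟨C, D, rfl⟩ := List.append_of_mem hx1B
  have pB : (C ++ (x - 1) :: D).Pairwise fun a b => b < a :=
    (List.pairwise_cons.mp pxB).2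
  obtain ⟨_, pxD, hcross2⟩ := List.pairwise_append.mp pB
  have hC : C = [] := by
    refine List.eq_nil_iff_forall_not_mem.mpr fun c hc' => ?_
    have h1 := hB0 c (List.mem_append_left _ hc')
    have h2 := hcross2 c hc' (x - 1) (List.mem_cons_self)
    omega
  subst hC
  have hD : ∀ d ∈ D, d + 2 ≤ x := fun d hd => by
    have := (List.pairwise_cons.mp pxD).1 d hd
    omega
  simpa using lemB x A D hpos hA hD

/-- if `x` is `P`-ejectable then `row(P) ≡_H row(P)·x`. -/
theorem statement2 (P : List (List ℕ)) (x : ℕ)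
    (hP : IsDecreasingTableau P) (hx : Ejectable P x) :
    HeckeEquiv (rowWord P) (rowWord P ++ [x]) := by
  induction P generalizing x with
  | nil => exact absurd hx (by simp [Ejectable])
  | cons R rest ih =>
    obtain ⟨hxR, hcase⟩ := hx
    have hrow : rowWord (R :: rest) = rowWord rest ++ R := by simp [rowWord]
    have hchain : R.Chain' (fun a b => b < a) := hP.2.2.1 R (List.mem_cons_self)
    have hpos : 0 < x := hP.2.1 R (List.mem_cons_self) x hxR
    by_cases hmem : x - 1 ∈ R
    · have h2 : Ejectable rest (x - 1) := by
        rcases hcase with h | h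
        · exact absurd hmem h
        · exact h
      have IH := ih (x - 1) (decTail hP) h2
      rw [hrow]
      have step1 : HeckeEquiv (rowWord rest ++ R) ((rowWord rest ++ [x-1]) ++ R) :=
        .append_congr IH (.refl R)
      have step2 : HeckeEquiv (rowWord rest ++ ((x-1) :: R))
          (rowWord rest ++ (R ++ [x])) :=
        .append_congr (.refl _) (rowCase2 R x hchain hxR hmem hpos)
      exact (step1.congr rfl (by simp)).trans (step2.congr rfl (by simp))
    · rw [hrow]
      have h := HeckeEquiv.append_congr (.refl (rowWord rest))
        (rowCase1 R x hchain hxR hmem)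
      exact h.congr rfl (by simp)
end

section
/- Let P be a decreasing tableau with a removable cell (r,c), and let m_r < m_{r-1} < ⋯ < m_1 be the bumping path of (r,c) in P. Then for all 1 ≤ i < j ≤ r, the occurrence of m_i in row i of P is weakly to the right of the occurrence of m_j in row j of P (i.e., its column index is weakly larger). -/
section Statement3Aux

private lemma bump_mem_aux (T : List (List ℕ)) (r c : ℕ) (m : ℕ → ℕ)
    (hrc : IsRemovable T r c) (hm : IsBumpingPath T r c m) :
    ∀ j, 1 ≤ j → j ≤ r → m j ∈ RowOf T j := by
  intro j h1 h2
  rcases lt_or_eq_of_le h2 with h | h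
  · exact (hm.2 j h1 h).1
  · subst h
    obtain ⟨h1r, hrT, h1c, hlen, _⟩ := hrc
    have hc : c - 1 < (RowOf T j).length := by omega
    rw [hm.1, List.getD_eq_getElem _ _ hc]
    exact List.getElem_mem hc

set_option maxHeartbeats 1000000 in
private lemma bump_step_aux (T : List (List ℕ)) (r c : ℕ) (m : ℕ → ℕ)
    (hT : IsDecreasingTableau T) (hrc : IsRemovable T r c)
    (hm : IsBumpingPath T r c m) (i : ℕ) (hi : 1 ≤ i) (hir : i + 1 ≤ r) :
    (RowOf T (i + 1)).idxOf (m (i + 1)) ≤ (RowOf T i).idxOf (m i) := by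
  obtain ⟨hne, hpos, hrow, hcol⟩ := hT
  have hiT : i < T.length := lt_of_lt_of_le (by omega) hrc.2.1
  have hRj : RowOf T (i + 1) = T[i] := by
    show T.getD (i + 1 - 1) [] = T[i]
    rw [show i + 1 - 1 = i from rfl, List.getD_eq_getElem T [] hiT]
  have hRi : RowOf T i = T[i - 1]'(by omega) := by
    show T.getD (i - 1) [] = _
    rw [List.getD_eq_getElem T [] (by omega : i - 1 < T.length)]
  have hchain := List.isChain_iff_getElem.mp hcol (i - 1) (by omega)
  simp only [List.get_eq_getElem, show i - 1 + 1 = i from by omega] at hchain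
  rw [← hRi, ← hRj] at hchain
  -- k : position of m (i+1) in row i+1
  have hmem1 : m (i + 1) ∈ RowOf T (i + 1) :=
    bump_mem_aux T r c m hrc hm (i + 1) (by omega) hir
  set k := (RowOf T (i + 1)).idxOf (m (i + 1)) with hkdef
  have hk : k < (RowOf T (i + 1)).length := List.idxOf_lt_length_iff.mpr hmem1
  have hgetk : (RowOf T (i + 1)).getD k 0 = m (i + 1) := by
    rw [List.getD_eq_getElem _ _ hk]
    exact List.getElem_idxOf hk
  have hk' : k < (RowOf T i).length := lt_of_lt_of_le hk hchain.1
  set y := (RowOf T i).getD k 0 with hydef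
  have hy1 : m (i + 1) < y := by
    have := hchain.2 k hk
    rwa [hgetk] at this
  have hymem : y ∈ RowOf T i := by
    rw [hydef, List.getD_eq_getElem _ _ hk']
    exact List.getElem_mem hk'
  obtain ⟨hmi_mem, hlt, hmin⟩ := hm.2 i hi (by omega)
  have hmy : m i ≤ y := hmin y hymem hy1
  set p := (RowOf T i).idxOf (m i) with hpdef
  have hp : p < (RowOf T i).length := List.idxOf_lt_length_iff.mpr hmi_mem
  have hgetp : (RowOf T i).getD p 0 = m i := by
    rw [List.getD_eq_getElem _ _ hp]
    exact List.getElem_idxOf hp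
  by_contra hcontra
  push_neg at hcontra
  -- p < k, so y = row[k] < row[p] = m i, contradiction with m i ≤ y
  haveI : IsTrans ℕ (fun x y => y < x) := ⟨fun a b c h1 h2 => lt_trans h2 h1⟩
  have hrowmem : RowOf T i ∈ T := by rw [hRi]; exact List.getElem_mem _
  have hpw := List.isChain_iff_pairwise.mp (hrow _ hrowmem)
  have hdec := List.pairwise_iff_get.mp hpw ⟨p, hp⟩ ⟨k, hk'⟩ hcontra
  simp only [List.get_eq_getElem] at hdec
  rw [← List.getD_eq_getElem _ 0 hk', ← List.getD_eq_getElem _ 0 hp,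
    hgetp, ← hydef] at hdec
  omega

end Statement3Aux

/-- along a bumping path, the occurrence of `m i` in row `i` is weakly
to the right of the occurrence of `m j` in row `j`, for `i < j`. -/
theorem statement3 (T : List (List ℕ)) (r c : ℕ) (m : ℕ → ℕ)
    (hT : IsDecreasingTableau T) (hrc : IsRemovable T r c)
    (hm : IsBumpingPath T r c m) :
    ∀ i j, 1 ≤ i → i < j → j ≤ r →
      (RowOf T j).idxOf (m j) ≤ (RowOf T i).idxOf (m i) := by
  intro i j hi hij hjr
  induction j, hij using Nat.le_induction with
  | base => exact bump_step_aux T r c m hT hrc hm i hi hjr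
  | succ j hj ih =>
    exact le_trans
      (bump_step_aux T r c m hT hrc hm j (by omega) hjr)
      (ih (by omega))
end

section
/- Let P be a decreasing tableau with a removable cell, and let m_r < ⋯ < m_1 be the bumping path of that cell in P. Then m_1, the entry of the bumping path in the first row, is a P-ejectable value. -/
/-- the first-row entry of a bumping path is `P`-ejectable. -/
theorem statement4 (T : List (List ℕ)) (r c : ℕ) (m : ℕ → ℕ)
    (hT : IsDecreasingTableau T) (hrc : IsRemovable T r c)
    (hm : IsBumpingPath T r c m) :
    Ejectable T (m 1) := by
  obtain ⟨hr1, hrT, hc1, hlenc, _⟩ := hrc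
  obtain ⟨hmr, hmi⟩ := hm
  have hpos : ∀ R ∈ T, ∀ x ∈ R, 0 < x := hT.2.1
  have hchain : ∀ R ∈ T, R.Chain' (fun x y => y < x) := hT.2.2.1
  -- last element of a strictly decreasing list is minimal
  have hmin : ∀ (R : List ℕ), R.Chain' (fun x y => y < x) → R ≠ [] →
      ∀ y ∈ R, R.getD (R.length - 1) 0 ≤ y := by
    intro R hR hne y hy
    have hp : R.Pairwise (fun x y => y < x) :=
      List.isChain_iff_pairwise.mp hR
    obtain ⟨j, hj, rfl⟩ := List.getElem_of_mem hy
    have hl : 0 < R.length := List.length_pos_iff.mpr hne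
    have hgd : R.getD (R.length - 1) 0 = R[R.length - 1] :=
      List.getD_eq_getElem R 0 (by omega)
    rw [hgd]
    rcases lt_or_eq_of_le (Nat.le_sub_one_of_lt hj) with hlt | heq
    · exact le_of_lt (List.pairwise_iff_getElem.mp hp j (R.length - 1) hj (by omega) hlt)
    · simp [heq]
  have hrowmem : ∀ i, 1 ≤ i → i ≤ T.length → RowOf T i ∈ T := by
    intro i h1 h2
    have : RowOf T i = T[i - 1] := List.getD_eq_getElem T [] (by omega)
    rw [this]; exact List.getElem_mem _
  have hdrop : ∀ i, 1 ≤ i → i ≤ T.length →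
      T.drop (i - 1) = RowOf T i :: T.drop i := by
    intro i h1 h2
    have h3 : i - 1 < T.length := by omega
    have := List.drop_eq_getElem_cons h3
    rw [this]
    have e1 : RowOf T i = T[i - 1] := List.getD_eq_getElem T [] h3
    have e2 : i - 1 + 1 = i := by omega
    rw [e1, e2]
  have main : ∀ k i, i + k = r → 1 ≤ i → Ejectable (T.drop (i - 1)) (m i) := by
    intro k
    induction k with
    | zero =>
      intro i hik h1
      have hir : i = r := by omega
      subst hir
      rw [hdrop i h1 hrT]
      have hne : RowOf T i ≠ [] := by
        intro h; rw [h] at hlenc; simp at hlenc; omega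
      have hcl : (RowOf T i).length = c := hlenc
      have hmem : m i ∈ RowOf T i := by
        have : m i = (RowOf T i)[c - 1] := by
          rw [hmr]; exact List.getD_eq_getElem _ 0 (by omega)
        rw [this]; exact List.getElem_mem _
      refine ⟨hmem, Or.inl ?_⟩
      intro hcon
      have hmpos : 0 < m i := hpos _ (hrowmem i h1 hrT) _ hmem
      have hle : m i ≤ m i - 1 := by
        have := hmin (RowOf T i) (hchain _ (hrowmem i h1 hrT)) hne (m i - 1) hcon
        rwa [hcl, ← hmr] at this
      omega
    | succ k ih =>
      intro i hik h1
      have hir : i < r := by omega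
      have hiT : i ≤ T.length := by omega
      obtain ⟨hmem, hlt, hminrow⟩ := hmi i h1 hir
      rw [hdrop i h1 hiT]
      refine ⟨hmem, ?_⟩
      by_cases hcon : m i - 1 ∈ RowOf T i
      · right
        have hmpos : 0 < m i := hpos _ (hrowmem i h1 hiT) _ hmem
        have heq : m i - 1 = m (i + 1) := by
          by_contra hne
          have h2 : m (i + 1) < m i - 1 := by omega
          have := hminrow (m i - 1) hcon h2
          omega
        have := ih (i + 1) (by omega) (by omega)
        rw [heq]
        simpa using this
      · exact Or.inl hcon
  have := main (r - 1) 1 (by omega) le_rfl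
  simpa using this
end

section
/- The reverse row insertion algorithm Ψ is well-defined: given a decreasing tableau P, a P-removable cell s, and α ∈ {0,1}, the output tableau P' of Ψ(P, s, α) is again a decreasing tableau, and shape(P') equals shape(P) if α = 0, and shape(P) minus the cell s if α = 1. -/
open List

/-! ### Auxiliary definitions -/

def cntGt (R : List ℕ) (m : ℕ) : ℕ := (R.filter fun y => decide (m < y)).length

def SDrow (R : List ℕ) : Prop := R.Pairwise fun x y => y < x

def HD (T : List (List ℕ)) : List ℕ := T.headD []

def DomRow (R' R : List ℕ) : Prop :=
  R.length ≤ R'.length ∧ ∀ j < R.length, R.getD j 0 < R'.getD j 0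

/-! ### Basic lemmas on strictly decreasing rows -/

instance : IsTrans ℕ (fun x y => y < x) := ⟨fun _ _ _ h1 h2 => lt_trans h2 h1⟩

lemma sd_iff_chain' {R : List ℕ} : R.Chain' (fun x y => y < x) ↔ SDrow R :=
  List.isChain_iff_pairwise

lemma SDrow.nodup {R : List ℕ} (h : SDrow R) : R.Nodup :=
  h.imp fun h => (Nat.ne_of_lt h).symm

lemma sd_lt {R : List ℕ} (h : SDrow R) {i j : ℕ} (hij : i < j) (hj : j < R.length) :
    R.getD j 0 < R.getD i 0 := by
  rw [List.getD_eq_getElem _ _ hj, List.getD_eq_getElem _ _ (hij.trans hj)]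
  exact List.pairwise_iff_getElem.mp h i j (hij.trans hj) hj hij

lemma sd_le {R : List ℕ} (h : SDrow R) {i j : ℕ} (hij : i ≤ j) (hj : j < R.length) :
    R.getD j 0 ≤ R.getD i 0 := by
  rcases hij.lt_or_eq with h' | h'
  · exact (sd_lt h h' hj).le
  · rw [h']

lemma filter_gt_eq_take {R : List ℕ} (h : SDrow R) (m : ℕ) :
    R.filter (fun y => decide (m < y)) = R.take (cntGt R m) := by
  induction R with
  | nil => simp [cntGt]
  | cons a t ih =>
    rcases List.pairwise_cons.mp h with ⟨ha, ht⟩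
    by_cases hm : m < a
    · have : cntGt (a :: t) m = cntGt t m + 1 := by
        simp [cntGt, List.filter_cons, hm]
      rw [this]
      simp [List.filter_cons, hm, List.take_succ_cons, ih ht]
    · have hft : t.filter (fun y => decide (m < y)) = [] := by
        rw [List.filter_eq_nil_iff]
        intro y hy
        simp only [decide_eq_true_eq]
        exact fun hmy => hm (hmy.trans (ha y hy))
      have : cntGt (a :: t) m = 0 := by simp [cntGt, List.filter_cons, hm, hft]
      rw [this]
      simp [List.filter_cons, hm, hft]

lemma cntGt_le_length (R : List ℕ) (m : ℕ) : cntGt R m ≤ R.length :=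
  List.length_filter_le _ _

lemma getD_gt_iff_lt_cnt {R : List ℕ} (h : SDrow R) {m j : ℕ} (hj : j < R.length) :
    m < R.getD j 0 ↔ j < cntGt R m := by
  constructor
  · intro hgt
    by_contra hcon
    push_neg at hcon
    have hmem : R.getD j 0 ∈ R.filter (fun y => decide (m < y)) := by
      rw [List.mem_filter]
      refine ⟨?_, by simpa using hgt⟩
      rw [List.getD_eq_getElem _ _ hj]; exact List.getElem_mem _
    rw [filter_gt_eq_take h] at hmem
    obtain ⟨i, hi, hieq⟩ := List.getElem_of_mem hmem
    simp only [List.length_take] at hi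
    have hilen : i < R.length := by omega
    rw [List.getElem_take] at hieq
    have hicnt : i < cntGt R m := by omega
    have : i = j := by
      have := h.nodup.getElem_inj_iff (hi := hilen) (hj := hj)
      rw [← this]
      rw [List.getD_eq_getElem _ _ hj] at hieq
      exact hieq
    omega
  · intro hlt
    have hmem : R.getD j 0 ∈ R.filter (fun y => decide (m < y)) := by
      rw [filter_gt_eq_take h]
      have hjt : j < (R.take (cntGt R m)).length := by
        simp [List.length_take]; omega
      have : (R.take (cntGt R m)).getD j 0 = R.getD j 0 := by
        rw [List.getD_eq_getElem _ _ hjt, List.getD_eq_getElem _ _ hj, List.getElem_take]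
      rw [← this, List.getD_eq_getElem _ _ hjt]
      exact List.getElem_mem _
    rw [List.mem_filter] at hmem
    simpa using hmem.2

lemma cntGt_eq_of {R : List ℕ} (h : SDrow R) {m j : ℕ} (hj : j ≤ R.length)
    (hiff : ∀ i, i < R.length → (m < R.getD i 0 ↔ i < j)) : cntGt R m = j := by
  rcases Nat.lt_trichotomy (cntGt R m) j with hc | hc | hc
  · have hcl : cntGt R m < R.length := lt_of_lt_of_le hc hj
    have := (hiff _ hcl).mpr hc
    rw [getD_gt_iff_lt_cnt h hcl] at this
    omega
  · exact hc
  · have hjl : j < R.length := lt_of_lt_of_le hc (cntGt_le_length R m)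
    have := (getD_gt_iff_lt_cnt h hjl).mpr hc
    rw [hiff _ hjl] at this
    omega

lemma le_cntGt {R : List ℕ} (h : SDrow R) {m t : ℕ} (ht : t ≤ R.length)
    (hall : ∀ i < t, m < R.getD i 0) : t ≤ cntGt R m := by
  by_contra hcon
  push_neg at hcon
  have hcl : cntGt R m < R.length := lt_of_lt_of_le hcon ht
  have := (getD_gt_iff_lt_cnt h hcl).mp (hall _ hcon)
  omega

lemma mi_spec {R : List ℕ} (h : SDrow R) {m : ℕ} (hpos : 0 < cntGt R m) :
    ((R.filter fun y => decide (m < y)).min?).getD 0 = R.getD (cntGt R m - 1) 0 := by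
  set F := R.filter fun y => decide (m < y) with hF
  have hFne : F ≠ [] := by
    intro hc; rw [cntGt, ← hF, hc] at hpos; simp at hpos
  obtain ⟨x, hx⟩ : ∃ x, F.min? = some x := by
    cases hmin : F.min? with
    | none => exact absurd (List.min?_eq_none_iff.mp hmin) hFne
    | some x => exact ⟨x, rfl⟩
  have hxmem : x ∈ F := List.min?_mem hx
  have hxle : ∀ b ∈ F, x ≤ b := by
    intro b hb
    exact ((List.le_min?_iff hx).mp le_rfl) b hb
  have hcntlen : cntGt R m ≤ R.length := cntGt_le_length R m
  have hjlt : cntGt R m - 1 < R.length := by omega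
  -- the element R[cnt-1] belongs to F
  have hRmem : R.getD (cntGt R m - 1) 0 ∈ F := by
    rw [hF, List.mem_filter]
    constructor
    · rw [List.getD_eq_getElem _ _ hjlt]; exact List.getElem_mem _
    · simpa using (getD_gt_iff_lt_cnt h hjlt).mpr (by omega)
  -- x = R[i] for some i < cnt, hence R[cnt-1] ≤ x
  have hto : F = R.take (cntGt R m) := by rw [hF]; exact filter_gt_eq_take h m
  obtain ⟨i, hi, hieq⟩ := List.getElem_of_mem (hto ▸ hxmem)
  have hi' := hi
  simp only [List.length_take] at hi'
  have hicnt : i < cntGt R m := by omega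
  have hilen : i < R.length := by omega
  have hxval : x = R.getD i 0 := by
    rw [List.getD_eq_getElem _ _ hilen, ← List.getElem_take (h := hi), hieq]
  have h1 : R.getD (cntGt R m - 1) 0 ≤ x := by
    rw [hxval]; exact sd_le h (by omega) hjlt
  have h2 : x ≤ R.getD (cntGt R m - 1) 0 := hxle _ hRmem
  rw [hx]
  simp only [Option.getD_some]
  omega

/-! ### replaceVal lemmas -/

lemma length_replaceVal (R : List ℕ) (o n : ℕ) : (replaceVal R o n).length = R.length :=
  List.length_map _

lemma getD_replaceVal {R : List ℕ} (o n : ℕ) {j : ℕ} (hj : j < R.length) :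
    (replaceVal R o n).getD j 0 = if R.getD j 0 = o then n else R.getD j 0 := by
  have hj' : j < (replaceVal R o n).length := by rw [length_replaceVal]; exact hj
  rw [List.getD_eq_getElem _ _ hj', List.getD_eq_getElem _ _ hj]
  simp [replaceVal, List.getElem_map]

lemma mem_replaceVal {R : List ℕ} {o n y : ℕ} (hy : y ∈ replaceVal R o n) :
    y = n ∨ (y ∈ R ∧ y ≠ o) := by
  rw [replaceVal, List.mem_map] at hy
  obtain ⟨z, hz, hzy⟩ := hy
  by_cases h : z = o
  · left; rw [← hzy]; simp [h]
  · right; rw [← hzy]; simp only [if_neg h]; exact ⟨hz, h⟩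




/-! ### Invariants -/

def FlagInv (T : List (List ℕ)) (m : ℕ) (a : Bool) : Prop :=
  a = true → 1 ≤ m ∧ (m ∈ HD T → m - 1 ∈ HD T)

def BelowInv (R : List ℕ) (T : List (List ℕ)) (m : ℕ) : Prop :=
  DomRow R (HD T) ∧ cntGt (HD T) m < cntGt R m

lemma sd_HD {T : List (List ℕ)} (hT : IsDecreasingTableau T) : SDrow (HD T) := by
  cases T with
  | nil => exact List.Pairwise.nil
  | cons R t => exact sd_iff_chain'.mp (hT.2.2.1 R (List.mem_cons_self))

lemma pos_HD {T : List (List ℕ)} (hT : IsDecreasingTableau T) : ∀ x ∈ HD T, 0 < x := by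
  cases T with
  | nil => intro x hx; simp [HD] at hx
  | cons R t => exact hT.2.1 R (List.mem_cons_self)

lemma IDT_cons {T : List (List ℕ)} {R' : List ℕ} (hT : IsDecreasingTableau T)
    (h1 : R' ≠ []) (h2 : ∀ x ∈ R', 0 < x) (h3 : SDrow R')
    (h4 : (HD T).length ≤ R'.length)
    (h5 : ∀ j < (HD T).length, (HD T).getD j 0 < R'.getD j 0) :
    IsDecreasingTableau (R' :: T) := by
  obtain ⟨t1, t2, t3, t4⟩ := hT
  refine ⟨?_, ?_, ?_, ?_⟩
  · intro S hS; rcases List.mem_cons.mp hS with h | h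
    · rw [h]; exact h1
    · exact t1 S h
  · intro S hS; rcases List.mem_cons.mp hS with h | h
    · rw [h]; exact h2
    · exact t2 S h
  · intro S hS; rcases List.mem_cons.mp hS with h | h
    · rw [h]; exact sd_iff_chain'.mpr h3
    · exact t3 S h
  · show List.IsChain _ (R' :: T); rw [List.isChain_cons]
    refine ⟨?_, t4⟩
    intro y hy
    cases T with
    | nil => simp at hy
    | cons S t =>
      simp only [List.head?_cons, Option.mem_def, Option.some.injEq] at hy
      subst hy
      exact ⟨h4, h5⟩

lemma IDT_tail {T : List (List ℕ)} {R : List ℕ} (h : IsDecreasingTableau (R :: T)) :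
    IsDecreasingTableau T :=
  ⟨fun S hS => h.1 S (List.mem_cons_of_mem _ hS),
   fun S hS => h.2.1 S (List.mem_cons_of_mem _ hS),
   fun S hS => h.2.2.1 S (List.mem_cons_of_mem _ hS),
   h.2.2.2.tail⟩

lemma IDT_take {T : List (List ℕ)} (h : IsDecreasingTableau T) (n : ℕ) :
    IsDecreasingTableau (T.take n) :=
  ⟨fun S hS => h.1 S (List.mem_of_mem_take hS),
   fun S hS => h.2.1 S (List.mem_of_mem_take hS),
   fun S hS => h.2.2.1 S (List.mem_of_mem_take hS),
   h.2.2.2.take n⟩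

lemma IDT_drop {T : List (List ℕ)} (h : IsDecreasingTableau T) (n : ℕ) :
    IsDecreasingTableau (T.drop n) :=
  ⟨fun S hS => h.1 S (List.mem_of_mem_drop hS),
   fun S hS => h.2.1 S (List.mem_of_mem_drop hS),
   fun S hS => h.2.2.1 S (List.mem_of_mem_drop hS),
   h.2.2.2.drop n⟩

/-! ### The two ways a row can be processed -/

lemma keep_spec (R : List ℕ) (T : List (List ℕ)) (m : ℕ)
    (hR0 : R ≠ []) (hRpos : ∀ x ∈ R, 0 < x) (hRsd : SDrow R)
    (hT : IsDecreasingTableau T) (hB : BelowInv R T m) :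
    IsDecreasingTableau (R :: T) ∧
    (∀ R'', SDrow R'' → DomRow R'' R →
      BelowInv R'' (R :: T) (R.getD (cntGt R m - 1) 0)) := by
  obtain ⟨⟨hlen, hpt⟩, hcnt⟩ := hB
  have hk0 : 0 < cntGt R m := by omega
  have hk : cntGt R m ≤ R.length := cntGt_le_length R m
  set k := cntGt R m with hkdef
  have hjlt : k - 1 < R.length := by omega
  set mi := R.getD (k-1) 0 with hmidef
  have hmigt : m < mi := (getD_gt_iff_lt_cnt hRsd hjlt).mpr (by omega)
  constructor
  · exact IDT_cons hT hR0 hRpos hRsd hlen hpt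
  · intro R'' hsd'' hdom
    obtain ⟨hlen'', hpt''⟩ := hdom
    have hcntR : cntGt R mi = k - 1 := by
      apply cntGt_eq_of hRsd (by omega)
      intro i hi
      constructor
      · intro hgt
        by_contra hcon
        push_neg at hcon
        have : R.getD i 0 ≤ mi := sd_le hRsd hcon hi
        omega
      · intro hlt'
        exact sd_lt hRsd hlt' hjlt
    refine ⟨⟨?_, ?_⟩, ?_⟩
    · simpa [HD] using hlen''
    · simpa [HD] using hpt''
    · have h2 : k ≤ cntGt R'' mi := by
        apply le_cntGt hsd'' (le_trans hk hlen'')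
        intro i hi
        have h3 : mi ≤ R.getD i 0 := sd_le hRsd (by omega) (by omega)
        have h4 : R.getD i 0 < R''.getD i 0 := hpt'' i (by omega)
        omega
      simp only [HD, List.headD_cons]
      omega

lemma replace_spec (R : List ℕ) (T : List (List ℕ)) (m v : ℕ)
    (hR0 : R ≠ []) (hRpos : ∀ x ∈ R, 0 < x) (hRsd : SDrow R)
    (hT : IsDecreasingTableau T) (hB : BelowInv R T m)
    (hv1 : m ≤ v) (hv2 : v < R.getD (cntGt R m - 1) 0) (hvnot : v ∉ R) (hvpos : 0 < v)
    (hcrit : cntGt R m - 1 < (HD T).length → (HD T).getD (cntGt R m - 1) 0 < v) :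
    (replaceVal R (R.getD (cntGt R m - 1) 0) v).length = R.length ∧
    IsDecreasingTableau (replaceVal R (R.getD (cntGt R m - 1) 0) v :: T) ∧
    R.getD (cntGt R m - 1) 0 ∉ replaceVal R (R.getD (cntGt R m - 1) 0) v ∧
    ∀ R'', SDrow R'' → DomRow R'' R →
      BelowInv R'' (replaceVal R (R.getD (cntGt R m - 1) 0) v :: T)
        (R.getD (cntGt R m - 1) 0) := by
  obtain ⟨⟨hlen, hpt⟩, hcnt⟩ := hB
  have hk0 : 0 < cntGt R m := by omega
  have hk : cntGt R m ≤ R.length := cntGt_le_length R m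
  set k := cntGt R m with hkdef
  have hjlt : k - 1 < R.length := by omega
  set mi := R.getD (k-1) 0 with hmidef
  have hmigt : m < mi := (getD_gt_iff_lt_cnt hRsd hjlt).mpr (by omega)
  set R' := replaceVal R mi v with hR'def
  have hlenR' : R'.length = R.length := length_replaceVal R mi v
  have hget : ∀ i, i < R.length → R'.getD i 0 = if i = k - 1 then v else R.getD i 0 := by
    intro i hi
    rw [hR'def, getD_replaceVal _ _ hi]
    by_cases h : i = k - 1
    · subst h
      rw [if_pos hmidef.symm, if_pos rfl]
    · have hne : R.getD i 0 ≠ mi := by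
        intro hc
        apply h
        rw [hmidef, List.getD_eq_getElem _ _ hi, List.getD_eq_getElem _ _ hjlt] at hc
        exact hRsd.nodup.getElem_inj_iff.mp hc
      rw [if_neg hne, if_neg h]
  have hhi : ∀ i, k - 1 < i → i < R.length → R.getD i 0 ≤ m := by
    intro i h1 h2
    by_contra hcon
    push_neg at hcon
    have := (getD_gt_iff_lt_cnt hRsd h2).mp hcon
    omega
  have hR'sd : SDrow R' := by
    apply List.pairwise_iff_getElem.mpr
    intro p q hp hq hpq
    have hp' : p < R.length := by rwa [hlenR'] at hp
    have hq' : q < R.length := by rwa [hlenR'] at hq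
    rw [← List.getD_eq_getElem R' 0 hp, ← List.getD_eq_getElem R' 0 hq,
      hget p hp', hget q hq']
    by_cases hqj : q = k - 1
    · subst hqj
      rw [if_pos rfl, if_neg (by omega : ¬ p = k - 1)]
      have : mi ≤ R.getD p 0 := sd_le hRsd (by omega) hjlt
      omega
    · rw [if_neg hqj]
      by_cases hpj : p = k - 1
      · subst hpj
        rw [if_pos rfl]
        have h1 : R.getD q 0 ≤ m := hhi q (by omega) hq'
        have h2 : R.getD q 0 ≠ v := by
          intro hc
          apply hvnot
          rw [← hc, List.getD_eq_getElem _ _ hq']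
          exact List.getElem_mem _
        omega
      · rw [if_neg hpj]
        exact sd_lt hRsd hpq hq'
  have hR'pos : ∀ x ∈ R', 0 < x := by
    intro x hx
    rcases mem_replaceVal hx with h | ⟨h, _⟩
    · omega
    · exact hRpos x h
  have hR'ne : R' ≠ [] := by
    intro hc
    have hc2 : R.length = 0 := by rw [← hlenR', hc]; rfl
    exact hR0 (List.length_eq_zero_iff.mp hc2)
  have hminotin : mi ∉ R' := by
    intro hc
    rcases mem_replaceVal hc with h | ⟨_, h⟩
    · omega
    · exact h rfl
  have hpt' : ∀ i < (HD T).length, (HD T).getD i 0 < R'.getD i 0 := by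
    intro i hi
    have hi' : i < R.length := lt_of_lt_of_le hi hlen
    rw [hget i hi']
    by_cases h : i = k - 1
    · subst h
      rw [if_pos rfl]
      exact hcrit hi
    · rw [if_neg h]
      exact hpt i hi
  have hcntR' : cntGt R' mi = k - 1 := by
    apply cntGt_eq_of hR'sd (by omega)
    intro i hi
    rw [hlenR'] at hi
    rw [hget i hi]
    by_cases h : i = k - 1
    · subst h
      rw [if_pos rfl]
      constructor
      · intro hgt; omega
      · intro hlt; omega
    · rw [if_neg h]
      constructor
      · intro hgt
        by_contra hcon
        push_neg at hcon
        have := hhi i (by omega) hi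
        omega
      · intro hlt
        exact sd_lt hRsd (by omega) hjlt
  refine ⟨hlenR', IDT_cons hT hR'ne hR'pos hR'sd (by omega) hpt', hminotin, ?_⟩
  intro R'' hsd'' hdom
  obtain ⟨hlen'', hpt''⟩ := hdom
  refine ⟨⟨?_, ?_⟩, ?_⟩
  · simp only [HD, List.headD_cons]
    omega
  · simp only [HD, List.headD_cons]
    intro i hi
    rw [hlenR'] at hi
    rw [hget i hi]
    by_cases h : i = k - 1
    · subst h
      rw [if_pos rfl]
      have := hpt'' (k-1) hjlt
      omega
    · rw [if_neg h]
      exact hpt'' i hi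
  · have h2 : k ≤ cntGt R'' mi := by
      apply le_cntGt hsd'' (hk.trans hlen'')
      intro i hi
      have h3 : mi ≤ R.getD i 0 := sd_le hRsd (by omega) (by omega)
      have h4 : R.getD i 0 < R''.getD i 0 := hpt'' i (by omega)
      omega
    simp only [HD, List.headD_cons]
    omega

/-! ### One full step of Ψ -/

lemma step_spec (R : List ℕ) (T : List (List ℕ)) (m : ℕ) (a : Bool)
    (hR0 : R ≠ []) (hRpos : ∀ x ∈ R, 0 < x) (hRsd : SDrow R)
    (hT : IsDecreasingTableau T) (hF : FlagInv T m a) (hB : BelowInv R T m) :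
    (psiRowStep R T m a).1.length = R.length ∧
    IsDecreasingTableau ((psiRowStep R T m a).1 :: T) ∧
    FlagInv ((psiRowStep R T m a).1 :: T) (psiRowStep R T m a).2.1
      (psiRowStep R T m a).2.2 ∧
    ∀ R', SDrow R' → DomRow R' R →
      BelowInv R' ((psiRowStep R T m a).1 :: T) (psiRowStep R T m a).2.1 := by
  have hk0 : 0 < cntGt R m := by
    obtain ⟨_, hcnt⟩ := hB; omega
  have hk : cntGt R m ≤ R.length := cntGt_le_length R m
  have hjlt : cntGt R m - 1 < R.length := by omega
  have hmi : ((R.filter fun y => decide (m < y)).min?).getD 0 = R.getD (cntGt R m - 1) 0 :=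
    mi_spec hRsd hk0
  set mi := R.getD (cntGt R m - 1) 0 with hmidef
  have hmigt : m < mi := (getD_gt_iff_lt_cnt hRsd hjlt).mpr (by omega)
  have hstep : psiRowStep R T m a =
      (if R.contains (mi - 1) then (R, mi, a)
       else if a && !(R.contains m) then (replaceVal R mi m, mi, true)
       else match smallestEjectableBetween T m mi with
            | some x => (replaceVal R mi x, mi, true)
            | none => (R, mi, false)) := by
    simp only [psiRowStep, hmi]
  rw [hstep]
  by_cases h1 : R.contains (mi - 1) = true
  · rw [if_pos h1]
    obtain ⟨hidt, hbel⟩ := keep_spec R T m hR0 hRpos hRsd hT hB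
    refine ⟨rfl, hidt, ?_, hbel⟩
    intro ha
    refine ⟨by show 1 ≤ mi; omega, ?_⟩
    intro _hm
    simp only [HD, List.headD_cons]
    simpa using h1
  · by_cases h2 : (a && !(R.contains m)) = true
    · rw [if_neg h1, if_pos h2]
      have h2' : a = true ∧ m ∉ R := by simpa using h2
      obtain ⟨ha, hmnot⟩ := h2'
      have hm1 : 1 ≤ m := (hF ha).1
      have hcrit : cntGt R m - 1 < (HD T).length →
          (HD T).getD (cntGt R m - 1) 0 < m := by
        intro hlt
        have hsdH : SDrow (HD T) := sd_HD hT
        have hle : (HD T).getD (cntGt R m - 1) 0 ≤ m := by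
          by_contra hcon
          push_neg at hcon
          have := (getD_gt_iff_lt_cnt hsdH hlt).mp hcon
          obtain ⟨_, hcnt⟩ := hB
          omega
        rcases lt_or_eq_of_le hle with h | h
        · exact h
        · exfalso
          have hmem : m ∈ HD T := by
            rw [← h, List.getD_eq_getElem _ _ hlt]
            exact List.getElem_mem _
          have hm1mem : m - 1 ∈ HD T := (hF ha).2 hmem
          obtain ⟨p, hp, hpeq⟩ := List.getElem_of_mem hm1mem
          have hpD : (HD T).getD p 0 = m - 1 := by
            rw [List.getD_eq_getElem _ _ hp, hpeq]
          have hjp : cntGt R m - 1 < p := by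
            by_contra hcon
            push_neg at hcon
            have := sd_le hsdH hcon hlt
            omega
          obtain ⟨⟨hlenB, hptB⟩, _⟩ := hB
          have hplen : p < R.length := lt_of_lt_of_le hp hlenB
          have h5 : m - 1 < R.getD p 0 := by
            have := hptB p hp
            omega
          have h6 : R.getD p 0 ≤ m := by
            by_contra hcon
            push_neg at hcon
            have := (getD_gt_iff_lt_cnt hRsd hplen).mp hcon
            omega
          have h7 : R.getD p 0 = m := by omega
          apply hmnot
          rw [← h7, List.getD_eq_getElem _ _ hplen]
          exact List.getElem_mem _
      obtain ⟨s1, s2, s3, s4⟩ :=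
        replace_spec R T m m hR0 hRpos hRsd hT hB le_rfl hmigt hmnot (by omega) hcrit
      refine ⟨s1, s2, ?_, s4⟩
      intro _
      refine ⟨by show 1 ≤ mi; omega, ?_⟩
      intro hmem
      simp only [HD, List.headD_cons] at hmem
      exact absurd hmem s3
    · rw [if_neg h1, if_neg h2]
      rcases hE : smallestEjectableBetween T m mi with _ | x
      · obtain ⟨hidt, hbel⟩ := keep_spec R T m hR0 hRpos hRsd hT hB
        refine ⟨rfl, hidt, ?_, hbel⟩
        intro ha
        simp at ha
      · rw [smallestEjectableBetween] at hE
        have hxmem := List.min?_mem hE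
        rw [List.mem_filter] at hxmem
        obtain ⟨hxH, hxP⟩ := hxmem
        have hxm : m < x ∧ x < mi := by
          simp only [Bool.and_eq_true, decide_eq_true_eq] at hxP
          exact ⟨hxP.1.2, hxP.2⟩
        have hvnot : x ∉ R := by
          intro hc
          obtain ⟨i, hi, hieq⟩ := List.getElem_of_mem hc
          have hiD : R.getD i 0 = x := by rw [List.getD_eq_getElem _ _ hi, hieq]
          have hicnt : i < cntGt R m := by
            rw [← getD_gt_iff_lt_cnt hRsd hi, hiD]
            exact hxm.1
          have : mi ≤ R.getD i 0 := sd_le hRsd (by omega) hjlt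
          omega
        have hcrit : cntGt R m - 1 < (HD T).length →
            (HD T).getD (cntGt R m - 1) 0 < x := by
          intro hlt
          have hsdH : SDrow (HD T) := sd_HD hT
          have hle : (HD T).getD (cntGt R m - 1) 0 ≤ m := by
            by_contra hcon
            push_neg at hcon
            have := (getD_gt_iff_lt_cnt hsdH hlt).mp hcon
            obtain ⟨_, hcnt⟩ := hB
            omega
          omega
        obtain ⟨s1, s2, s3, s4⟩ :=
          replace_spec R T m x hR0 hRpos hRsd hT hB (le_of_lt hxm.1) hxm.2 hvnot
            (by omega) hcrit
        refine ⟨s1, s2, ?_, s4⟩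
        intro _
        refine ⟨by show 1 ≤ mi; omega, ?_⟩
        intro hmem
        simp only [HD, List.headD_cons] at hmem
        exact absurd hmem s3

/-! ### Processing a list of rows -/

lemma rows_spec : ∀ (L T : List (List ℕ)) (m : ℕ) (a : Bool),
    IsDecreasingTableau L → IsDecreasingTableau T →
    FlagInv T m a →
    (∀ Rl, L.getLast? = some Rl → BelowInv Rl T m) →
    IsDecreasingTableau (psiRows L T m a).1 ∧
    shape (psiRows L T m a).1 = shape L ++ shape T ∧
    FlagInv (psiRows L T m a).1 (psiRows L T m a).2.1 (psiRows L T m a).2.2 ∧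
    (∀ R', L ≠ [] → SDrow R' → DomRow R' (L.headD []) →
      BelowInv R' (psiRows L T m a).1 (psiRows L T m a).2.1)
  | [], T, m, a, _hL, hT, hF, _hB => by
    refine ⟨hT, by simp [psiRows, shape], hF, ?_⟩
    intro R' h
    exact absurd rfl h
  | R :: rest, T, m, a, hL, hT, hF, hB => by
    have hR0 : R ≠ [] := hL.1 R (List.mem_cons_self)
    have hRpos := hL.2.1 R (List.mem_cons_self)
    have hRsd : SDrow R := sd_iff_chain'.mp (hL.2.2.1 R (List.mem_cons_self))
    have hrest : IsDecreasingTableau rest := IDT_tail hL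
    have hBrest : ∀ Rl, rest.getLast? = some Rl → BelowInv Rl T m := by
      intro Rl hRl
      apply hB
      cases rest with
      | nil => simp at hRl
      | cons R2 l => rw [List.getLast?_cons_cons]; exact hRl
    obtain ⟨ihT, ihshape, ihF, ihB⟩ := rows_spec rest T m a hrest hT hF hBrest
    have hBR : BelowInv R (psiRows rest T m a).1 (psiRows rest T m a).2.1 := by
      cases rest with
      | nil => exact hB R (by simp)
      | cons R2 l =>
        exact ihB R (by simp) hRsd (List.isChain_cons_cons.mp hL.2.2.2).1
    obtain ⟨st1, st2, st3, st4⟩ :=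
      step_spec R (psiRows rest T m a).1 (psiRows rest T m a).2.1
        (psiRows rest T m a).2.2 hR0 hRpos hRsd ihT ihF hBR
    simp only [psiRows]
    refine ⟨st2, ?_, st3, ?_⟩
    · simp only [shape, List.map_cons]
      rw [show ((psiRowStep R (psiRows rest T m a).1 (psiRows rest T m a).2.1
          (psiRows rest T m a).2.2).1).length = R.length from st1]
      rw [show List.map List.length (psiRows rest T m a).1 = shape rest ++ shape T
        from ihshape]
      simp [shape]
    · intro R' _ hsd hdom
      exact st4 R' hsd hdom

/-! ### Helpers for the final assembly -/

lemma IDT_nil : IsDecreasingTableau ([] : List (List ℕ)) :=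
  ⟨by simp, by simp, by simp, List.isChain_nil⟩

lemma getD_nil_of_le {P : List (List ℕ)} {n : ℕ} (h : P.length ≤ n) :
    P.getD n [] = [] := by
  rw [List.getD_eq_getElem?_getD, List.getElem?_eq_none h]
  rfl

lemma row_mem {P : List (List ℕ)} {n : ℕ} (h : n < P.length) : P.getD n [] ∈ P := by
  rw [List.getD_eq_getElem _ _ h]
  exact List.getElem_mem _

lemma row_rel {P : List (List ℕ)} (hP : IsDecreasingTableau P) {i : ℕ}
    (h : i + 1 < P.length) :
    (P.getD (i+1) []).length ≤ (P.getD i []).length ∧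
    ∀ j < (P.getD (i+1) []).length,
      (P.getD (i+1) []).getD j 0 < (P.getD i []).getD j 0 := by
  have hc := List.isChain_iff_getElem.mp hP.2.2.2 i (by omega)
  rw [List.getD_eq_getElem _ _ h, List.getD_eq_getElem _ _ (by omega : i < P.length)]
  exact hc

lemma getLast?_take {P : List (List ℕ)} {n : ℕ} (h1 : 1 ≤ n) (h2 : n ≤ P.length) :
    (P.take n).getLast? = some (P.getD (n-1) []) := by
  have hlen : (P.take n).length = n := by
    rw [List.length_take]
    omega
  rw [List.getLast?_eq_getElem?, hlen]
  have hn1 : n - 1 < (P.take n).length := by omega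
  rw [List.getElem?_eq_getElem hn1, List.getElem_take]
  congr 1
  rw [List.getD_eq_getElem _ _ (by omega : n - 1 < P.length)]

lemma getD_dropLast {l : List ℕ} {j : ℕ} (h : j < l.length - 1) :
    l.dropLast.getD j 0 = l.getD j 0 := by
  have h1 : j < l.dropLast.length := by
    rw [List.length_dropLast]; exact h
  have h2 : j < l.length := by omega
  rw [List.getD_eq_getElem _ _ h1, List.getD_eq_getElem _ _ h2]
  exact List.getElem_dropLast _

lemma HD_drop {P : List (List ℕ)} {n : ℕ} : HD (P.drop n) = P.getD n [] := by
  rw [HD, List.headD_eq_head?, List.head?_drop, ← List.getD_eq_getElem?_getD]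

lemma shape_nonzero {P : List (List ℕ)} (hP : IsDecreasingTableau P) :
    ∀ x ∈ shape P, x ≠ 0 := by
  intro x hx
  rw [shape, List.mem_map] at hx
  obtain ⟨Rx, hRx, hx'⟩ := hx
  have := hP.1 Rx hRx
  rw [← hx']
  have := List.length_pos_iff.mpr this
  omega

lemma shapeMinus_split {P : List (List ℕ)} (hP : IsDecreasingTableau P) {r c : ℕ}
    (hr1 : 1 ≤ r) (hr2 : r ≤ P.length) (hlen : (P.getD (r-1) []).length = c) :
    shapeMinus (shape P) r =
      (shape P).take (r-1) ++
        ((c-1) :: (shape P).drop r).filter (fun n => decide (n ≠ 0)) := by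
  rw [shapeMinus]
  have hlensh : (shape P).length = P.length := by simp [shape]
  have hr3 : r - 1 < P.length := by omega
  have hgd : (shape P).getD (r-1) 0 = c := by
    rw [shape, List.getD_eq_getElem _ _ (by simpa using hr3), List.getElem_map]
    rw [← hlen, List.getD_eq_getElem _ _ hr3]
  rw [hgd, List.set_eq_take_append_cons_drop, if_pos (by omega : r - 1 < (shape P).length)]
  rw [List.filter_append]
  congr 1
  · apply List.filter_eq_self.mpr
    intro x hx
    simpa using shape_nonzero hP x (List.mem_of_mem_take hx)
  · rw [show r - 1 + 1 = r by omega]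


/-- Ψ is well-defined: the output tableau is a decreasing tableau, of
the same shape if `α = 0` and of the shape with the cell `(r,c)` removed if `α = 1`. -/
theorem statement5 (P : List (List ℕ)) (r c : ℕ) (α : Bool)
    (hP : IsDecreasingTableau P) (hrc : IsRemovable P r c) :
    IsDecreasingTableau (psi P r α).1 ∧
      shape (psi P r α).1 = if α then shapeMinus (shape P) r else shape P := by
  obtain ⟨hr1, hr2, hc1, hc2, hc3⟩ := hrc
  have hrow1 : r - 1 < P.length := by omega
  have hrmem : P.getD (r-1) [] ∈ P := row_mem hrow1
  have hrne : P.getD (r-1) [] ≠ [] := hP.1 _ hrmem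
  have hrpos : ∀ x ∈ P.getD (r-1) [], 0 < x := hP.2.1 _ hrmem
  have hrsd : SDrow (P.getD (r-1) []) := sd_iff_chain'.mp (hP.2.2.1 _ hrmem)
  have hlenr : (P.getD (r-1) []).length = c := hc2
  have hlenr1 : (P.getD r []).length < c := by
    have h : RowOf P (r+1) = P.getD r [] := by
      rw [RowOf, show r + 1 - 1 = r by omega]
    rw [← h]
    exact hc3
  cases α with
  | false =>
    have hB0 : ∀ Rl, (P.take r).getLast? = some Rl → BelowInv Rl (P.drop r) 0 := by
      intro Rl hRl
      rw [getLast?_take hr1 hr2] at hRl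
      injection hRl with hRl
      subst hRl
      refine ⟨⟨?_, ?_⟩, ?_⟩
      · rw [HD_drop]
        omega
      · rw [HD_drop]
        intro j hj
        have hr3 : r < P.length := by
          by_contra hcon
          push_neg at hcon
          rw [getD_nil_of_le hcon] at hj
          simp at hj
        have hrel := (row_rel hP (show (r-1)+1 < P.length by omega)).2
        rw [show r - 1 + 1 = r by omega] at hrel
        exact hrel j hj
      · rw [HD_drop]
        have h1 : cntGt (P.getD r []) 0 ≤ (P.getD r []).length := cntGt_le_length _ _
        have h2 : c ≤ cntGt (P.getD (r-1) []) 0 := by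
          apply le_cntGt hrsd (by omega)
          intro i hi
          apply hrpos
          rw [List.getD_eq_getElem _ _ (by omega : i < (P.getD (r-1) []).length)]
          exact List.getElem_mem _
        omega
    obtain ⟨k1, k2, _k3, _k4⟩ :=
      rows_spec (P.take r) (P.drop r) 0 false (IDT_take hP r) (IDT_drop hP r)
        (fun h => by simp at h) hB0
    have hpsi : (psi P r false).1 = (psiRows (P.take r) (P.drop r) 0 false).1 := by
      simp [psi, psiStage, psiUpper, psiBase, psiM]
    rw [hpsi]
    refine ⟨k1, ?_⟩
    rw [k2]
    simp only [shape, List.map_take, List.map_drop, List.take_append_drop]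
    simp [shape]
  | true =>
    have hm : psiM P r true = (P.getD (r-1) []).getD (c-1) 0 := by
      rw [psiM, if_pos rfl, RowOf, List.getLast?_eq_getElem?]
      rw [List.getElem?_eq_getElem (show (P.getD (r-1) []).length - 1 < _ by omega)]
      rw [Option.getD_some, ← List.getD_eq_getElem _ 0, hlenr]
    set m := (P.getD (r-1) []).getD (c-1) 0 with hmdef
    have hmpos : 0 < m := by
      apply hrpos
      rw [hmdef, List.getD_eq_getElem (P.getD (r-1) []) 0
        (show c - 1 < (P.getD (r-1) []).length by omega)]
      exact List.getElem_mem _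
    have hdll : (RowOf P r).dropLast.length = c - 1 := by
      rw [RowOf, List.length_dropLast, hlenr]
    have hupper : psiUpper P r true = P.take (r-1) := by rw [psiUpper, if_pos rfl]
    by_cases hcc : c = 1
    · -- c = 1 : the last row disappears, and r is the last row
      have hrlen : r = P.length := by
        by_contra hcon
        have hr3 : r < P.length := by omega
        have hne := hP.1 _ (row_mem hr3)
        have hz : (P.getD r []).length = 0 := by omega
        exact hne (List.length_eq_zero_iff.mp hz)
      have hdrop : P.drop r = [] := by rw [hrlen]; simp
      have hdl : (RowOf P r).dropLast = [] := by
        apply List.length_eq_zero_iff.mp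
        rw [hdll]
        omega
      have hbase : psiBase P r true = [] := by
        rw [psiBase, if_pos rfl, if_pos hdl, hdrop]
      have hflag : FlagInv [] (psiM P r true) true := by
        intro _
        rw [hm]
        exact ⟨hmpos, fun hmem => by simp [HD] at hmem⟩
      have hB1 : ∀ Rl, (P.take (r-1)).getLast? = some Rl →
          BelowInv Rl [] (psiM P r true) := by
        intro Rl hRl
        have hr2' : 2 ≤ r := by
          by_contra hcon
          have h1 : r = 1 := by omega
          rw [h1] at hRl
          simp at hRl
        rw [getLast?_take (by omega) (by omega),
          show r - 1 - 1 = r - 2 by omega] at hRl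
        injection hRl with hRl
        subst hRl
        refine ⟨⟨by simp [HD], by simp [HD]⟩, ?_⟩
        have hrel := row_rel hP (show (r-2)+1 < P.length by omega)
        rw [show r - 2 + 1 = r - 1 by omega] at hrel
        have h1 : 1 ≤ (P.getD (r-2) []).length := by
          have := hrel.1
          omega
        have h2 : psiM P r true < (P.getD (r-2) []).getD 0 0 := by
          have h3 := hrel.2 0 (by omega)
          rw [hm, hmdef, show c - 1 = 0 by omega]
          exact h3
        have h4 : 1 ≤ cntGt (P.getD (r-2) []) (psiM P r true) := by
          apply le_cntGt (sd_iff_chain'.mp (hP.2.2.1 _ (row_mem (by omega)))) h1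
          intro i hi
          rw [show i = 0 by omega]
          exact h2
        have h5 : cntGt (HD ([] : List (List ℕ))) (psiM P r true) = 0 := by
          simp [HD, cntGt]
        omega
      obtain ⟨k1, k2, _k3, _k4⟩ :=
        rows_spec (P.take (r-1)) [] (psiM P r true) true (IDT_take hP (r-1)) IDT_nil
          hflag hB1
      have hpsi : (psi P r true).1 =
          (psiRows (P.take (r-1)) [] (psiM P r true) true).1 := by
        rw [psi, psiStage, hupper, hbase]
        simp
      rw [if_pos rfl, hpsi, k2]
      refine ⟨k1, ?_⟩
      rw [shapeMinus_split hP hr1 hr2 hlenr]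
      have hdropsh : (shape P).drop r = [] := by
        apply List.eq_nil_of_length_eq_zero
        simp [shape, hrlen]
      rw [hdropsh, List.filter_cons]
      simp only [show c - 1 = 0 by omega]
      simp [shape, List.map_take]
    · -- c ≥ 2 : the last cell of row r is deleted
      have hcc2 : 2 ≤ c := by omega
      have hdlne : (RowOf P r).dropLast ≠ [] := by
        intro hcon
        have := hdll
        rw [hcon] at this
        simp at this
        omega
      have hbase : psiBase P r true = (RowOf P r).dropLast :: P.drop r := by
        rw [psiBase, if_pos rfl, if_neg hdlne]
      have hdlrow : (RowOf P r).dropLast = (P.getD (r-1) []).dropLast := rfl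
      have hdlsd : SDrow (P.getD (r-1) []).dropLast :=
        List.Pairwise.sublist (List.dropLast_sublist _) hrsd
      have hdlpos : ∀ x ∈ (P.getD (r-1) []).dropLast, 0 < x := fun x hx =>
        hrpos x ((List.dropLast_sublist _).subset hx)
      have hdllen : (P.getD (r-1) []).dropLast.length = c - 1 := by
        rw [List.length_dropLast, hlenr]
      have hgetdl : ∀ j < c - 1,
          (P.getD (r-1) []).dropLast.getD j 0 = (P.getD (r-1) []).getD j 0 := by
        intro j hj
        exact getD_dropLast (by omega)
      have hTidt : IsDecreasingTableau ((P.getD (r-1) []).dropLast :: P.drop r) := by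
        apply IDT_cons (IDT_drop hP r)
        · intro hcon
          have := hdllen
          rw [hcon] at this
          simp at this
          omega
        · exact hdlpos
        · exact hdlsd
        · rw [HD_drop]
          omega
        · rw [HD_drop]
          intro j hj
          have hr3 : r < P.length := by
            by_contra hcon
            push_neg at hcon
            rw [getD_nil_of_le hcon] at hj
            simp at hj
          have hrel := (row_rel hP (show (r-1)+1 < P.length by omega)).2
          rw [show r - 1 + 1 = r by omega] at hrel
          rw [hgetdl j (by omega)]
          exact hrel j hj
      have hmnotin : m ∉ (P.getD (r-1) []).dropLast := by
        intro hmem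
        obtain ⟨i, hi, hieq⟩ := List.getElem_of_mem hmem
        have hi' : i < c - 1 := by rwa [hdllen] at hi
        have hiD : (P.getD (r-1) []).getD i 0 = m := by
          rw [← hgetdl i hi', List.getD_eq_getElem _ _ hi, hieq]
        have := sd_lt hrsd (show i < c - 1 by omega) (show c - 1 < _ by omega)
        rw [hiD, ← hmdef] at this
        omega
      have hflag : FlagInv ((P.getD (r-1) []).dropLast :: P.drop r) (psiM P r true)
          true := by
        intro _
        rw [hm]
        refine ⟨hmpos, fun hmem => ?_⟩
        simp only [HD, List.headD_cons] at hmem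
        exact absurd hmem hmnotin
      have hB1 : ∀ Rl, (P.take (r-1)).getLast? = some Rl →
          BelowInv Rl ((P.getD (r-1) []).dropLast :: P.drop r) (psiM P r true) := by
        intro Rl hRl
        have hr2' : 2 ≤ r := by
          by_contra hcon
          have h1 : r = 1 := by omega
          rw [h1] at hRl
          simp at hRl
        rw [getLast?_take (by omega) (by omega),
          show r - 1 - 1 = r - 2 by omega] at hRl
        injection hRl with hRl
        subst hRl
        have hrel := row_rel hP (show (r-2)+1 < P.length by omega)
        rw [show r - 2 + 1 = r - 1 by omega] at hrel
        refine ⟨⟨?_, ?_⟩, ?_⟩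
        · simp only [HD, List.headD_cons]
          rw [hdllen]
          have := hrel.1
          omega
        · simp only [HD, List.headD_cons]
          intro j hj
          rw [hdllen] at hj
          rw [hgetdl j hj]
          exact hrel.2 j (by omega)
        · simp only [HD, List.headD_cons]
          have h1 : cntGt (P.getD (r-1) []).dropLast (psiM P r true) ≤ c - 1 := by
            have := cntGt_le_length (P.getD (r-1) []).dropLast (psiM P r true)
            omega
          have h2 : c ≤ cntGt (P.getD (r-2) []) (psiM P r true) := by
            apply le_cntGt (sd_iff_chain'.mp (hP.2.2.1 _ (row_mem (by omega))))
              (by have := hrel.1; omega)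
            intro i hi
            have h3 := hrel.2 i (by omega)
            have h4 : m ≤ (P.getD (r-1) []).getD i 0 := by
              rw [hmdef]
              exact sd_le hrsd (by omega) (by omega)
            rw [hm]
            omega
          omega
      obtain ⟨k1, k2, _k3, _k4⟩ :=
        rows_spec (P.take (r-1)) ((P.getD (r-1) []).dropLast :: P.drop r)
          (psiM P r true) true (IDT_take hP (r-1)) hTidt hflag hB1
      have hpsi : (psi P r true).1 = (psiRows (P.take (r-1))
          ((P.getD (r-1) []).dropLast :: P.drop r) (psiM P r true) true).1 := by
        rw [psi, psiStage, hupper, hbase]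
        rfl
      rw [if_pos rfl, hpsi, k2]
      refine ⟨k1, ?_⟩
      rw [shapeMinus_split hP hr1 hr2 hlenr]
      have hfil : ((c-1) :: (shape P).drop r).filter (fun n => decide (n ≠ 0)) =
          (c-1) :: (shape P).drop r := by
        apply List.filter_eq_self.mpr
        intro x hx
        rcases List.mem_cons.mp hx with h | h
        · simp [h]
          omega
        · simpa using shape_nonzero hP x (List.mem_of_mem_drop h)
      rw [hfil]
      simp only [shape, List.map_take, List.map_cons, List.map_drop, hdllen]
end

section
/- In the reverse insertion algorithm Ψ applied to (P, (r,c), α), for each row index 1 ≤ i ≤ r, the status flag satisfies: α_i = 0 if and only if the bumping-path value m_i is ejectable in P'_{≥ i} (the working tableau restricted to rows i and below after processing row i). -/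
namespace Statement6Aux

lemma nat_min?_eq_some_iff {l : List ℕ} {a : ℕ} :
    l.min? = some a ↔ a ∈ l ∧ ∀ b ∈ l, a ≤ b :=
  List.min?_eq_some_iff

lemma min?_exists {l : List ℕ} (h : l ≠ []) : ∃ a, l.min? = some a := by
  cases l with
  | nil => simp at h
  | cons x t => exact ⟨_, List.min?_cons⟩

lemma minFilter {R : List ℕ} {m : ℕ} (h : ∃ y ∈ R, m < y) :
    ∃ mi, (R.filter fun y => decide (m < y)).min? = some mi ∧ mi ∈ R ∧ m < mi ∧
      ∀ y ∈ R, m < y → mi ≤ y := by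
  obtain ⟨y, hy, hmy⟩ := h
  have hne : (R.filter fun y => decide (m < y)) ≠ [] := by
    intro he
    have : y ∈ (R.filter fun y => decide (m < y)) := by
      simp [List.mem_filter, hy, hmy]
    rw [he] at this; simp at this
  obtain ⟨mi, hmi⟩ := min?_exists hne
  rw [nat_min?_eq_some_iff] at hmi
  obtain ⟨hmem, hlb⟩ := hmi
  simp only [List.mem_filter, decide_eq_true_eq] at hmem
  refine ⟨mi, ?_, hmem.1, hmem.2, fun z hz hmz => hlb z ?_⟩
  · rw [nat_min?_eq_some_iff]
    exact ⟨by simp [List.mem_filter, hmem.1, hmem.2], hlb⟩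
  · simp [List.mem_filter, hz, hmz]

lemma not_mem_replaceVal {R : List ℕ} {a x : ℕ} (h : x ≠ a) : a ∉ replaceVal R a x := by
  intro hmem
  rw [replaceVal, List.mem_map] at hmem
  obtain ⟨y, hy, he⟩ := hmem
  by_cases hya : y = a
  · simp only [if_pos hya] at he; exact h he
  · simp only [if_neg hya] at he; exact hya he

lemma between_of_smallest {B : List (List ℕ)} {lo hi x : ℕ}
    (h : smallestEjectableBetween B lo hi = some x) : lo < x ∧ x < hi := by
  unfold smallestEjectableBetween at h
  rw [nat_min?_eq_some_iff] at h
  have := h.1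
  simp only [List.mem_filter, Bool.and_eq_true, decide_eq_true_eq] at this
  exact ⟨this.2.1.2, this.2.2⟩

lemma ejectable_cons {R : List ℕ} {B : List (List ℕ)} {x : ℕ} :
    Ejectable (R :: B) x ↔ x ∈ R ∧ (x - 1 ∉ R ∨ Ejectable B (x - 1)) := Iff.rfl

lemma le_headD_of_mem {R : List ℕ} {x : ℕ}
    (hc : R.Chain' fun a b => b < a) (hx : x ∈ R) : x ≤ R.headD 0 := by
  haveI : IsTrans ℕ (fun a b => b < a) := ⟨fun a b c h1 h2 => lt_trans h2 h1⟩
  replace hc := List.isChain_iff_pairwise.mp hc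
  cases R with
  | nil => simp at hx
  | cons h t =>
    rcases List.mem_cons.mp hx with rfl | hxt
    · simp
    · exact le_of_lt ((List.pairwise_cons.mp hc).1 x hxt)

/-- The key step lemma. -/
lemma step {R : List ℕ} {B : List (List ℕ)} {m1 : ℕ} {a1 : Bool}
    (hpos : ∀ x ∈ R, 0 < x)
    (hex : ∃ y ∈ R, m1 < y)
    (hinv : m1 = 0 ∨ (a1 = false ↔ Ejectable B m1)) :
    ((psiRowStep R B m1 a1).2.2 = false ↔
        Ejectable ((psiRowStep R B m1 a1).1 :: B) (psiRowStep R B m1 a1).2.1)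
      ∧ (psiRowStep R B m1 a1).2.1 ∈ R ∧ m1 < (psiRowStep R B m1 a1).2.1 := by
  obtain ⟨mi, hmin, hmiR, hm1mi, hlb⟩ := minFilter hex
  have hstep : psiRowStep R B m1 a1 =
      (if R.contains (mi - 1) then (R, mi, a1)
       else if a1 && !(R.contains m1) then (replaceVal R mi m1, mi, true)
       else
         match smallestEjectableBetween B m1 mi with
         | some x => (replaceVal R mi x, mi, true)
         | none => (R, mi, false)) := by
    rw [psiRowStep, hmin]
    rfl
  rw [hstep]
  by_cases hd : (mi - 1) ∈ R
  · have hcont : R.contains (mi - 1) = true := by simpa using hd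
    rw [if_pos hcont]
    refine ⟨?_, hmiR, hm1mi⟩
    have hpos1 : 0 < mi - 1 := hpos _ hd
    have hm1 : mi - 1 = m1 := by
      by_contra hne
      have h2 : m1 < mi - 1 := by omega
      exact absurd (hlb _ hd h2) (by omega)
    rw [ejectable_cons]
    rw [hm1] at hd
    rcases hinv with h0 | hiff
    · omega
    · simp only [hmiR, true_and, hm1, hd, not_true_eq_false, false_or]
      exact hiff
  · have hcont : ¬(R.contains (mi - 1) = true) := by simpa using hd
    rw [if_neg hcont]
    by_cases h2 : a1 = true ∧ m1 ∉ R
    · have hcond : (a1 && !(R.contains m1)) = true := by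
        simp [h2.1, h2.2]
      rw [if_pos hcond]
      refine ⟨?_, hmiR, hm1mi⟩
      simp only [Bool.true_eq_false, false_iff]
      rw [ejectable_cons]
      intro hcontra
      exact not_mem_replaceVal (by omega) hcontra.1
    · have hcond : ¬((a1 && !(R.contains m1)) = true) := fun hc => h2 (by simpa using hc)
      rw [if_neg hcond]
      cases hse : smallestEjectableBetween B m1 mi with
      | none =>
        simp only
        refine ⟨?_, hmiR, hm1mi⟩
        simp only [true_iff]
        exact ⟨hmiR, Or.inl hd⟩
      | some x =>
        simp only
        refine ⟨?_, hmiR, hm1mi⟩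
        have hx := between_of_smallest hse
        simp only [Bool.true_eq_false, false_iff]
        rw [ejectable_cons]
        intro hcontra
        exact not_mem_replaceVal (by omega) hcontra.1

lemma headD_mem {R : List ℕ} (h : R ≠ []) : R.headD 0 ∈ R := by
  cases R with
  | nil => simp at h
  | cons a t => simp

/-- Main induction over the processed rows. -/
lemma rows : ∀ (L : List (List ℕ)) (B : List (List ℕ)) (m : ℕ) (a : Bool),
    (∀ R ∈ L, R ≠ []) →
    (∀ R ∈ L, ∀ x ∈ R, 0 < x) →
    (∀ R ∈ L, R.Chain' fun x y => y < x) →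
    (L.Chain' fun R S => S.headD 0 < R.headD 0) →
    (m < ((L.getLast?).getD []).headD 0) →
    (m = 0 ∨ (a = false ↔ Ejectable B m)) →
    L ≠ [] →
    ((psiRows L B m a).2.2 = false ↔ Ejectable (psiRows L B m a).1 (psiRows L B m a).2.1)
      ∧ (psiRows L B m a).2.1 ≤ (L.headD []).headD 0
  | [], B, m, a => by intro _ _ _ _ _ _ h; exact absurd rfl h
  | [R], B, m, a => by
    intro hne hpos hdec hch hlast hinv _
    have hRne : R ≠ [] := hne R (by simp)
    have hlast' : m < R.headD 0 := by simpa using hlast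
    have hs := step (hpos R (by simp)) ⟨R.headD 0, headD_mem hRne, hlast'⟩ hinv
      (B := B) (a1 := a)
    simp only [psiRows]
    exact ⟨hs.1, le_headD_of_mem (hdec R (by simp)) hs.2.1⟩
  | R :: S :: t, B, m, a => by
    intro hne hpos hdec hch hlast hinv _
    have hch' := List.isChain_cons_cons.mp hch
    have ih := rows (S :: t) B m a (fun X h => hne X (List.mem_cons_of_mem _ h))
      (fun X h => hpos X (List.mem_cons_of_mem _ h))
      (fun X h => hdec X (List.mem_cons_of_mem _ h)) hch'.2
      (by rwa [List.getLast?_cons_cons] at hlast) hinv (by simp)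
    have hRne : R ≠ [] := hne R (by simp)
    have hexR : ∃ y ∈ R, (psiRows (S :: t) B m a).2.1 < y := by
      refine ⟨R.headD 0, headD_mem hRne, lt_of_le_of_lt ?_ hch'.1⟩
      simpa using ih.2
    have hs := step (hpos R (by simp)) hexR (Or.inr ih.1)
      (B := (psiRows (S :: t) B m a).1) (a1 := (psiRows (S :: t) B m a).2.2)
    simp only [psiRows]
    exact ⟨hs.1, le_headD_of_mem (hdec R (by simp)) hs.2.1⟩

lemma heads_chain : ∀ (P : List (List ℕ)), (∀ R ∈ P, R ≠ []) →
    (P.Chain' fun R S => S.length ≤ R.length ∧ ∀ j < S.length, S.getD j 0 < R.getD j 0) →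
    P.Chain' fun R S => S.headD 0 < R.headD 0
  | [], _, _ => by exact List.isChain_nil
  | [R], _, _ => by exact List.isChain_singleton _
  | R :: S :: t, hne, hch => by
    replace hch := List.isChain_cons_cons.mp hch
    refine List.isChain_cons_cons.mpr ?_
    refine ⟨?_, heads_chain (S :: t) (fun X h => hne X (List.mem_cons_of_mem _ h)) hch.2⟩
    have hS : S ≠ [] := hne S (by simp)
    have h0 : 0 < S.length := List.length_pos_iff.mpr hS
    have := hch.1.2 0 h0
    cases S with
    | nil => simp at hS
    | cons s st =>
      cases R with
      | nil =>
        exfalso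
        have := hch.1.1
        simp at this
      | cons x xt => simpa using this

lemma chain'_getD {l : List (List ℕ)} {rel : List ℕ → List ℕ → Prop} (h : l.Chain' rel)
    {j : ℕ} (hj : j + 1 < l.length) :
    rel (l.getD j []) (l.getD (j + 1) []) := by
  rw [List.getD_eq_getElem l [] (by omega), List.getD_eq_getElem l [] hj]
  have := List.isChain_iff_getElem.mp h j (by omega)
  simpa using this

lemma getLast?_drop_take {P : List (List ℕ)} {k d : ℕ} (hk : k ≤ P.length) (hd : d < k) :
    (((P.take k).drop d).getLast?).getD [] = P.getD (k - 1) [] := by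
  have hlen : ((P.take k).drop d).length = k - d := by
    simp [List.length_drop, List.length_take]
    omega
  rw [List.getLast?_eq_getElem?, hlen, List.getElem?_drop, List.getElem?_take]
  rw [if_pos (by omega)]
  have he : d + (k - d - 1) = k - 1 := by omega
  rw [he, List.getD_eq_getElem?_getD]

end Statement6Aux
/-- in Ψ, for each `1 ≤ i ≤ r`, the flag `α_i` is `0` iff `m_i` is
ejectable in `P'_{≥ i}` (the working tableau restricted to rows `≥ i` after
processing row `i`). -/
theorem statement6 (P : List (List ℕ)) (r c : ℕ) (α : Bool)
    (hP : IsDecreasingTableau P) (hrc : IsRemovable P r c) :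
    ∀ i, 1 ≤ i → i ≤ r →
      ((psiStage P r α i).2.2 = false ↔
        Ejectable (psiStage P r α i).1 (psiStage P r α i).2.1) := by
  obtain ⟨hne, hpos, hdec, hch⟩ := hP
  obtain ⟨hr1, hrP, hc1, hlenc, hltc⟩ := hrc
  intro i hi1 hir
  have hheads := Statement6Aux.heads_chain P hne hch
  have hrlt : r - 1 < P.length := by omega
  have hRrP : P.getD (r - 1) [] ∈ P := by
    rw [List.getD_eq_getElem P [] hrlt]
    exact List.getElem_mem _
  have hRrne : P.getD (r - 1) [] ≠ [] := hne _ hRrP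
  cases α with
  | false =>
    have memP : ∀ R ∈ (P.take r).drop (i - 1), R ∈ P := fun R h =>
      (List.take_sublist r P).subset ((List.drop_sublist _ _).subset h)
    have hLlen : ((P.take r).drop (i - 1)).length = r - (i - 1) := by
      simp [List.length_drop, List.length_take]
      omega
    have hLne : (P.take r).drop (i - 1) ≠ [] := by
      intro h
      rw [h] at hLlen
      simp at hLlen
      omega
    have hlast : (0 : ℕ) < ((((P.take r).drop (i - 1)).getLast?).getD []).headD 0 := by
      rw [Statement6Aux.getLast?_drop_take (by omega) (by omega)]
      exact hpos _ hRrP _ (Statement6Aux.headD_mem hRrne)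
    have key := Statement6Aux.rows ((P.take r).drop (i - 1)) (P.drop r) 0 false
      (fun R h => hne R (memP R h)) (fun R h => hpos R (memP R h))
      (fun R h => hdec R (memP R h)) ((hheads.take r).drop (i - 1)) hlast (Or.inl rfl) hLne
    have hstage : psiStage P r false i =
        psiRows ((P.take r).drop (i - 1)) (P.drop r) 0 false := by
      simp [psiStage, psiUpper, psiBase, psiM]
    rw [hstage]
    exact key.1
  | true =>
    have hM : psiM P r true = (P.getD (r - 1) []).getLast hRrne := by
      have h1 : psiM P r true = ((P.getD (r - 1) []).getLast?).getD 0 := by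
        simp [psiM, RowOf]
      rw [h1, List.getLast?_eq_getLast hRrne, Option.getD_some]
    have hmmem : (P.getD (r - 1) []).getLast hRrne ∈ P.getD (r - 1) [] :=
      List.getLast_mem hRrne
    have hbase : ¬ Ejectable (psiBase P r true) ((P.getD (r - 1) []).getLast hRrne) := by
      by_cases hdl : (P.getD (r - 1) []).dropLast = []
      · have hB : psiBase P r true = P.drop r := by
          unfold psiBase
          rw [if_pos rfl, if_pos (show (RowOf P r).dropLast = [] from hdl)]
        have hlen1 : (P.getD (r - 1) []).length = 1 := by
          have h1 := List.length_pos_iff.mpr hRrne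
          have h2 : (P.getD (r - 1) []).dropLast.length = 0 := by rw [hdl]; rfl
          rw [List.length_dropLast] at h2
          omega
        have hc : c = 1 := by
          rw [RowOf] at hlenc
          omega
        have hPr : P.length ≤ r := by
          by_contra h
          push_neg at h
          have hmm : P.getD r [] ∈ P := by
            rw [List.getD_eq_getElem P [] h]
            exact List.getElem_mem _
          have h0 : (RowOf P (r + 1)).length = 0 := by omega
          have h9 : RowOf P (r + 1) = [] := List.eq_nil_of_length_eq_zero h0
          rw [RowOf] at h9
          exact hne _ hmm (by simpa using h9)
        rw [hB, List.drop_eq_nil_of_le hPr]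
        simp [Ejectable]
      · have hB : psiBase P r true = (P.getD (r - 1) []).dropLast :: P.drop r := by
          unfold psiBase
          rw [if_pos rfl, if_neg (show ¬(RowOf P r).dropLast = [] from hdl)]
          rfl
        rw [hB, Statement6Aux.ejectable_cons]
        rintro ⟨hmem, -⟩
        haveI : IsTrans ℕ (fun a b => b < a) := ⟨fun a b c h1 h2 => lt_trans h2 h1⟩
        have hpw := (List.isChain_iff_pairwise).mp (hdec _ hRrP)
        rw [← List.dropLast_append_getLast hRrne, List.pairwise_append] at hpw
        exact lt_irrefl _ (hpw.2.2 _ hmem _ (by simp))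
    by_cases hieq : i = r
    · have hLnil : (P.take (r - 1)).drop (i - 1) = [] := by
        apply List.drop_eq_nil_of_le
        simp [List.length_take]
        omega
      have hstage : psiStage P r true i = (psiBase P r true, psiM P r true, true) := by
        simp [psiStage, psiUpper, hLnil, psiRows]
      rw [hstage]
      simp only [hM]
      constructor
      · intro h
        simp at h
      · intro h
        exact absurd h hbase
    · have hir' : i < r := lt_of_le_of_ne hir hieq
      have memP : ∀ R ∈ (P.take (r - 1)).drop (i - 1), R ∈ P := fun R h =>
        (List.take_sublist (r - 1) P).subset ((List.drop_sublist _ _).subset h)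
      have hLlen : ((P.take (r - 1)).drop (i - 1)).length = (r - 1) - (i - 1) := by
        simp [List.length_drop, List.length_take]
        omega
      have hLne : (P.take (r - 1)).drop (i - 1) ≠ [] := by
        intro h
        rw [h] at hLlen
        simp at hLlen
        omega
      have hlast : psiM P r true <
          ((((P.take (r - 1)).drop (i - 1)).getLast?).getD []).headD 0 := by
        rw [Statement6Aux.getLast?_drop_take (by omega) (by omega)]
        have h1 : psiM P r true ≤ (P.getD (r - 1) []).headD 0 := by
          rw [hM]
          exact Statement6Aux.le_headD_of_mem (hdec _ hRrP) hmmem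
        have h2 : (P.getD (r - 1) []).headD 0 < (P.getD (r - 2) []).headD 0 := by
          have h3 := Statement6Aux.chain'_getD hheads (j := r - 2) (by omega)
          have he : r - 2 + 1 = r - 1 := by omega
          rwa [he] at h3
        have he2 : r - 1 - 1 = r - 2 := by omega
        rw [he2]
        omega
      have hinv : psiM P r true = 0 ∨
          ((true : Bool) = false ↔ Ejectable (psiBase P r true) (psiM P r true)) := by
        right
        rw [hM]
        constructor
        · intro h
          simp at h
        · intro h
          exact absurd h hbase
      have key := Statement6Aux.rows ((P.take (r - 1)).drop (i - 1)) (psiBase P r true)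
        (psiM P r true) true
        (fun R h => hne R (memP R h)) (fun R h => hpos R (memP R h))
        (fun R h => hdec R (memP R h)) ((hheads.take (r - 1)).drop (i - 1)) hlast hinv hLne
      have hstage : psiStage P r true i =
          psiRows ((P.take (r - 1)).drop (i - 1)) (psiBase P r true) (psiM P r true) true := by
        simp [psiStage, psiUpper]
      rw [hstage]
      exact key.1
end

section
/- The reverse insertion respects Hecke equivalence: if Ψ(P, (r,c), α) = (P', m), then row(P) is Hecke-equivalent to row(P')·m. -/
/-! ### Helper development -/

section Helpers

/-- Letters at distance ≥ 2. -/
def Far (x y : ℕ) : Prop := x + 2 ≤ y ∨ y + 2 ≤ x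

lemma Far.symm' {x y : ℕ} (h : Far x y) : Far y x := h.elim Or.inr Or.inl

local infix:50 " ≋ " => HeckeEquiv

instance : Trans HeckeEquiv HeckeEquiv HeckeEquiv := ⟨.trans⟩
instance : Trans (Eq (α := List ℕ)) HeckeEquiv HeckeEquiv := ⟨fun h h' => h ▸ h'⟩
instance : Trans HeckeEquiv (Eq (α := List ℕ)) HeckeEquiv := ⟨fun h h' => h' ▸ h⟩

lemma he_app_l (a : List ℕ) {c d : List ℕ} (h : c ≋ d) :
    a ++ c ≋ a ++ d := .append_congr (.refl a) h

lemma he_app_r {a b : List ℕ} (c : List ℕ) (h : a ≋ b) :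
    a ++ c ≋ b ++ c := .append_congr h (.refl c)

lemma he_cons (x : ℕ) {c d : List ℕ} (h : c ≋ d) :
    x :: c ≋ x :: d := he_app_l [x] h

lemma he_comm_single {x y : ℕ} (h : Far x y) : [x, y] ≋ [y, x] :=
  .of (.comm x y h)

lemma he_idem (x : ℕ) : [x, x] ≋ [x] := .of (.idem x)

lemma he_comm_list {x : ℕ} {C : List ℕ} (h : ∀ y ∈ C, Far x y) :
    x :: C ≋ C ++ [x] := by
  induction C with
  | nil => exact .refl [x]
  | cons y C ih =>
    have h1 : [x, y] ++ C ≋ [y, x] ++ C :=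
      he_app_r C (he_comm_single (h y (by simp)))
    exact h1.trans (he_cons y (ih fun z hz => h z (by simp [hz])))

/-- eject: `(A ++ m :: C) ++ [m] ≡ A ++ m :: C` when `m` is far from `C`. -/
lemma core_eject {m : ℕ} {A C : List ℕ} (hC : ∀ y ∈ C, Far m y) :
    (A ++ m :: C) ++ [m] ≋ A ++ m :: C :=
  calc (A ++ m :: C) ++ [m] = A ++ ([m] ++ (C ++ [m])) := by simp
  _ ≋ A ++ ([m] ++ (m :: C)) := he_app_l _ (he_app_l _ (he_comm_list hC).symm)
  _ = A ++ ([m, m] ++ C) := by simp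
  _ ≋ A ++ ([m] ++ C) := he_app_l _ (he_app_r _ (he_idem m))
  _ = A ++ m :: C := by simp

/-- direct replacement: `m1 :: (A ++ mi :: C) ≡ (A ++ m1 :: C) ++ [mi]`. -/
lemma core_direct {m1 mi : ℕ} {A C : List ℕ}
    (hA : ∀ y ∈ A, Far m1 y) (hC : ∀ y ∈ C, Far mi y) :
    m1 :: (A ++ mi :: C) ≋ (A ++ m1 :: C) ++ [mi] :=
  calc m1 :: (A ++ mi :: C) = (m1 :: A) ++ (mi :: C) := by simp
  _ ≋ (A ++ [m1]) ++ (mi :: C) := he_app_r _ (he_comm_list hA)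
  _ = (A ++ [m1]) ++ (mi :: C) := by simp
  _ ≋ (A ++ [m1]) ++ (C ++ [mi]) := he_app_l _ (he_comm_list hC)
  _ = (A ++ m1 :: C) ++ [mi] := by simp

/-- dummy: `m1 :: R ≡ R ++ [m1+1]` when `R = A ++ (m1+1) :: m1 :: C`. -/
lemma core_dummy {m1 : ℕ} {A C : List ℕ}
    (hA : ∀ y ∈ A, Far m1 y) (hC : ∀ y ∈ C, Far (m1 + 1) y) :
    m1 :: (A ++ (m1+1) :: m1 :: C) ≋ (A ++ (m1+1) :: m1 :: C) ++ [m1+1] :=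
  calc m1 :: (A ++ (m1+1) :: m1 :: C) = (m1 :: A) ++ ((m1+1) :: m1 :: C) := by simp
  _ ≋ (A ++ [m1]) ++ ((m1+1) :: m1 :: C) := he_app_r _ (he_comm_list hA)
  _ = A ++ ([m1, m1+1, m1] ++ C) := by simp
  _ ≋ A ++ ([m1+1, m1, m1+1] ++ C) := he_app_l _ (he_app_r _ (.of (.braid m1)))
  _ = (A ++ [m1+1, m1]) ++ ((m1+1) :: C) := by simp
  _ ≋ (A ++ [m1+1, m1]) ++ (C ++ [m1+1]) := he_app_l _ (he_comm_list hC)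
  _ = (A ++ (m1+1) :: m1 :: C) ++ [m1+1] := by simp

/-- indirect replacement when `m1 ∈ R`:
`x :: m1 :: (A ++ mi :: m1 :: C) ≡ (A ++ x :: m1 :: C) ++ [mi]`. -/
lemma core_indirect {x m1 mi : ℕ} {A C : List ℕ}
    (hxA : ∀ y ∈ A, Far x y) (hmA : ∀ y ∈ A, Far m1 y)
    (hm1mi : Far m1 mi) (hC : ∀ y ∈ C, Far mi y) :
    x :: m1 :: (A ++ mi :: m1 :: C) ≋ (A ++ x :: m1 :: C) ++ [mi] :=
  calc x :: m1 :: (A ++ mi :: m1 :: C)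
      = [x] ++ ((m1 :: A) ++ (mi :: m1 :: C)) := by simp
  _ ≋ [x] ++ ((A ++ [m1]) ++ (mi :: m1 :: C)) := he_app_l _ (he_app_r _ (he_comm_list hmA))
  _ = (x :: A) ++ (m1 :: mi :: m1 :: C) := by simp
  _ ≋ (A ++ [x]) ++ (m1 :: mi :: m1 :: C) := he_app_r _ (he_comm_list hxA)
  _ = (A ++ [x, m1]) ++ ([mi, m1] ++ C) := by simp
  _ ≋ (A ++ [x, m1]) ++ ([m1, mi] ++ C) := he_app_l _ (he_app_r _ (he_comm_single hm1mi.symm'))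
  _ = (A ++ [x]) ++ ([m1, m1] ++ (mi :: C)) := by simp
  _ ≋ (A ++ [x]) ++ ([m1] ++ (mi :: C)) := he_app_l _ (he_app_r _ (he_idem m1))
  _ = (A ++ [x, m1]) ++ (mi :: C) := by simp
  _ ≋ (A ++ [x, m1]) ++ (C ++ [mi]) := he_app_l _ (he_comm_list hC)
  _ = (A ++ x :: m1 :: C) ++ [mi] := by simp

/-- absorb `m1` when `m1 ∈ R` just after `mi`:
`m1 :: (A ++ mi :: m1 :: C) ≡ A ++ mi :: m1 :: C`. -/
lemma core_absorb {m1 mi : ℕ} {A C : List ℕ}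
    (hmA : ∀ y ∈ A, Far m1 y) (hm1mi : Far m1 mi) :
    m1 :: (A ++ mi :: m1 :: C) ≋ A ++ mi :: m1 :: C :=
  calc m1 :: (A ++ mi :: m1 :: C) = (m1 :: A) ++ (mi :: m1 :: C) := by simp
  _ ≋ (A ++ [m1]) ++ (mi :: m1 :: C) := he_app_r _ (he_comm_list hmA)
  _ = A ++ ([m1, mi] ++ (m1 :: C)) := by simp
  _ ≋ A ++ ([mi, m1] ++ (m1 :: C)) := he_app_l _ (he_app_r _ (he_comm_single hm1mi))
  _ = (A ++ [mi]) ++ ([m1, m1] ++ C) := by simp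
  _ ≋ (A ++ [mi]) ++ ([m1] ++ C) := he_app_l _ (he_app_r _ (he_idem m1))
  _ = A ++ mi :: m1 :: C := by simp

end Helpers

section Eject

local infix:50 " ≋ " => HeckeEquiv

instance inst_s7 : IsTrans ℕ (fun x y => y < x) := ⟨fun _ _ _ h h' => h'.trans h⟩

/-- Rows strictly decreasing and positive. -/
def GoodRows (B : List (List ℕ)) : Prop :=
  ∀ R ∈ B, R.Pairwise (fun x y => y < x) ∧ ∀ x ∈ R, 0 < x

lemma rowWord_cons (R : List ℕ) (B : List (List ℕ)) :
    rowWord (R :: B) = rowWord B ++ R := by simp [rowWord]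

lemma rowWord_append (X Y : List (List ℕ)) :
    rowWord (X ++ Y) = rowWord Y ++ rowWord X := by simp [rowWord]

/-- Decompose a strictly decreasing list around a member. -/
lemma decomp_row {R : List ℕ} (hR : R.Pairwise (fun x y => y < x)) {m : ℕ}
    (hm : m ∈ R) :
    ∃ A C, R = A ++ m :: C ∧ (∀ y ∈ A, m < y) ∧ (∀ y ∈ C, y < m) ∧
      C.Pairwise (fun x y => y < x) := by
  obtain ⟨A, C, rfl⟩ := List.append_of_mem hm
  rw [List.pairwise_append] at hR
  obtain ⟨hA, hmc, hsep⟩ := hR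
  rw [List.pairwise_cons] at hmc
  exact ⟨A, C, rfl, fun y hy => hsep y hy m (by simp), hmc.1, hmc.2⟩

/-- If `m ∈ C`, `C` strictly decreasing, and `m` bounds `C` above, `C = m :: C'`. -/
lemma head_of_max {C : List ℕ} (hC : C.Pairwise (fun x y => y < x)) {m : ℕ}
    (hm : m ∈ C) (hmax : ∀ y ∈ C, y ≤ m) :
    ∃ C', C = m :: C' ∧ (∀ y ∈ C', y < m) := by
  cases C with
  | nil => simp at hm
  | cons h t =>
    rw [List.pairwise_cons] at hC
    have hhm : h = m := by
      rcases List.mem_cons.mp hm with h1 | h1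
      · omega
      · exact absurd (hC.1 m h1) (by have := hmax h (by simp); omega)
    exact ⟨t, by rw [hhm], fun y hy => hhm ▸ hC.1 y hy⟩

lemma map_replace_id {L : List ℕ} {m v : ℕ} (hL : ∀ y ∈ L, y ≠ m) :
    L.map (fun y => if y = m then v else y) = L := by
  induction L with
  | nil => rfl
  | cons a t ih =>
    simp only [List.map_cons, if_neg (hL a (by simp))]
    rw [ih fun y hy => hL y (by simp [hy])]

lemma replaceVal_decomp {A C : List ℕ} {m v : ℕ}
    (hA : ∀ y ∈ A, y ≠ m) (hC : ∀ y ∈ C, y ≠ m) :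
    replaceVal (A ++ m :: C) m v = A ++ v :: C := by
  simp only [replaceVal, List.map_append, List.map_cons, if_pos rfl]
  rw [map_replace_id hA, map_replace_id hC]
  simp

/-- Key ejectability fact: an ejectable value may be appended to the reading word. -/
lemma eject_hecke (B : List (List ℕ)) : ∀ x : ℕ, GoodRows B → ejectableB B x = true →
    rowWord B ++ [x] ≋ rowWord B := by
  induction B with
  | nil => intro x _ h; simp [ejectableB] at h
  | cons R0 rest ih =>
    intro x hG hE
    simp only [ejectableB, Bool.and_eq_true, Bool.or_eq_true, Bool.not_eq_true',
      List.elem_eq_mem, decide_eq_true_eq, decide_eq_false_iff_not, List.contains] at hE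
    obtain ⟨hmem, hor⟩ := hE
    have hR0 := hG R0 (by simp)
    have hxpos : 0 < x := hR0.2 x hmem
    obtain ⟨A, C, hdec, hA, hC, hCp⟩ := decomp_row hR0.1 hmem
    by_cases hx1 : (x - 1) ∈ R0
    · -- x - 1 ∈ R0, so the recursive branch must hold
      have hrec : ejectableB rest (x - 1) = true := by
        rcases hor with h | h
        · exact absurd hx1 h
        · exact h
      have hx1pos : 0 < x - 1 := hR0.2 _ hx1
      -- x - 1 ∈ C
      have hx1C : x - 1 ∈ C := by
        have hx1' : x - 1 ∈ A ++ x :: C := by rw [← hdec]; exact hx1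
        rcases List.mem_append.mp hx1' with h | h
        · have := hA _ h; omega
        · rcases List.mem_cons.mp h with h | h
          · omega
          · exact h
      have hmax : ∀ y ∈ C, y ≤ x - 1 := fun y hy => by have := hC y hy; omega
      obtain ⟨C', hC'eq, hC'⟩ := head_of_max hCp hx1C hmax
      have hFarC' : ∀ y ∈ C', Far x y := fun y hy => by
        have := hC' y hy; right; omega
      have hFarA : ∀ y ∈ A, Far (x - 1) y := fun y hy => by
        have h := hA y hy; left; omega
      have hx : x - 1 + 1 = x := by omega
      have hdum := core_dummy (A := A) (C := C') hFarA (by rw [hx]; exact hFarC')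
      rw [hx] at hdum
      have hGrest : GoodRows rest := fun R hR => hG R (by simp [hR])
      calc rowWord (R0 :: rest) ++ [x]
          = rowWord rest ++ ((A ++ x :: (x-1) :: C') ++ [x]) := by
            simp [rowWord_cons, hdec, hC'eq]
      _ ≋ rowWord rest ++ ((x-1) :: (A ++ x :: (x-1) :: C')) := he_app_l _ hdum.symm
      _ = (rowWord rest ++ [x-1]) ++ (A ++ x :: (x-1) :: C') := by simp
      _ ≋ rowWord rest ++ (A ++ x :: (x-1) :: C') :=
            he_app_r _ (ih (x-1) hGrest hrec)
      _ = rowWord (R0 :: rest) := by simp [rowWord_cons, hdec, hC'eq]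
    · -- x - 1 ∉ R0 : simple ejection
      have hFar : ∀ y ∈ C, Far x y := by
        intro y hy
        have h1 := hC y hy
        have h2 : y ≠ x - 1 := fun h => hx1 (by rw [hdec]; exact h ▸ (by
          simp [List.mem_append, hy]))
        right; omega
      calc rowWord (R0 :: rest) ++ [x] = rowWord rest ++ ((A ++ x :: C) ++ [x]) := by
            simp [rowWord_cons, hdec]
      _ ≋ rowWord rest ++ (A ++ x :: C) := he_app_l _ (core_eject hFar)
      _ = rowWord (R0 :: rest) := by simp [rowWord_cons, hdec]

end Eject

section Step

local infix:50 " ≋ " => HeckeEquiv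

/-- The invariant carried through the reverse insertion. -/
def PsiInv (W : List ℕ) (B : List (List ℕ)) (m : ℕ) (a : Bool) : Prop :=
  if a then 1 ≤ m ∧ HeckeEquiv W (rowWord B ++ [m])
  else HeckeEquiv W (rowWord B) ∧
    (m = 0 ∨ HeckeEquiv (rowWord B ++ [m]) (rowWord B))

lemma pairwise_replace {A C : List ℕ} {mi v : ℕ}
    (hP : (A ++ mi :: C).Pairwise (fun x y => y < x))
    (hvA : ∀ y ∈ A, v < y) (hvC : ∀ y ∈ C, y < v) :
    (A ++ v :: C).Pairwise (fun x y => y < x) := by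
  rw [List.pairwise_append] at hP ⊢
  obtain ⟨hA, hmc, hsep⟩ := hP
  refine ⟨hA, ?_, ?_⟩
  · rw [List.pairwise_cons]
    exact ⟨hvC, (List.pairwise_cons.mp hmc).2⟩
  · intro x hx y hy
    rcases List.mem_cons.mp hy with rfl | hy'
    · exact hvA x hx
    · exact hsep x hx y (by simp [hy'])

lemma step_lemma {R : List ℕ} {B : List (List ℕ)} {m1 : ℕ} {a1 : Bool} {W : List ℕ}
    (hRp : R.Pairwise (fun x y => y < x)) (hRpos : ∀ x ∈ R, 0 < x)
    (hB : GoodRows B) (hm : ∃ y ∈ R, m1 < y) (hInv : PsiInv W B m1 a1) :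
    ((psiRowStep R B m1 a1).1.Pairwise (fun x y => y < x) ∧
      ∀ x ∈ (psiRowStep R B m1 a1).1, 0 < x) ∧
    (psiRowStep R B m1 a1).2.1 ∈ R ∧ m1 < (psiRowStep R B m1 a1).2.1 ∧
    PsiInv (W ++ R) ((psiRowStep R B m1 a1).1 :: B) (psiRowStep R B m1 a1).2.1
      (psiRowStep R B m1 a1).2.2 := by
  classical
  obtain ⟨y0, hy0, hy0m⟩ := hm
  have hFne : (R.filter fun y => decide (m1 < y)) ≠ [] := by
    intro h
    have hmemF : y0 ∈ R.filter fun y => decide (m1 < y) := by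
      simp [List.mem_filter, hy0, hy0m]
    rw [h] at hmemF; simp at hmemF
  obtain ⟨mi, hmi⟩ : ∃ mi, (R.filter fun y => decide (m1 < y)).min? = some mi := by
    cases h : (R.filter fun y => decide (m1 < y)).min? with
    | none => exact absurd (List.min?_eq_none_iff.mp h) hFne
    | some a => exact ⟨a, rfl⟩
  have hgetD : ((R.filter fun y => decide (m1 < y)).min?).getD 0 = mi := by
    rw [hmi]; rfl
  rw [List.min?_eq_some_iff'] at hmi
  obtain ⟨hmiF, hminF⟩ := hmi
  have hmiR : mi ∈ R := (List.mem_filter.mp hmiF).1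
  have hm1mi : m1 < mi := by
    have := (List.mem_filter.mp hmiF).2; simpa using this
  have hmin : ∀ y ∈ R, m1 < y → mi ≤ y := fun y hy hlt =>
    hminF y (by simp [List.mem_filter, hy, hlt])
  have hmipos : 0 < mi := hRpos mi hmiR
  obtain ⟨A, C, hdec, hA, hC, hCp⟩ := decomp_row hRp hmiR
  have hAR : ∀ y ∈ A, y ∈ R := fun y hy => by rw [hdec]; simp [hy]
  have hCR : ∀ y ∈ C, y ∈ R := fun y hy => by rw [hdec]; simp [hy]
  have hCle : ∀ y ∈ C, y ≤ m1 := by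
    intro y hy
    by_contra hc
    have h1 := hmin y (hCR y hy) (by omega)
    have h2 := hC y hy
    omega
  simp only [psiRowStep, hgetD]
  by_cases hd : (mi - 1) ∈ R
  · -- Dummy case
    have hcd : R.contains (mi - 1) = true := by
      simpa [List.elem_eq_mem] using hd
    rw [if_pos hcd]
    have hdC : mi - 1 ∈ C := by
      rw [hdec] at hd
      rcases List.mem_append.mp hd with h | h
      · have := hA _ h; omega
      · rcases List.mem_cons.mp h with h | h
        · omega
        · exact h
    have hm1pos : 0 < mi - 1 := hRpos _ (hCR _ hdC)
    have hm1eq : m1 = mi - 1 := by have := hCle _ hdC; omega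
    have hmieq : mi = m1 + 1 := by omega
    have hdC' : m1 ∈ C := hm1eq ▸ hdC
    obtain ⟨C', hCeq, hC'⟩ := head_of_max hCp hdC' (fun y hy => hCle y hy)
    have hAfar : ∀ y ∈ A, Far m1 y := by
      intro y hy; have := hA y hy; left; omega
    have hC'far : ∀ y ∈ C', Far (m1 + 1) y := by
      intro y hy; have := hC' y hy; right; omega
    have hdum := core_dummy (A := A) (C := C') hAfar hC'far
    rw [← hmieq] at hdum
    refine ⟨⟨hRp, hRpos⟩, hmiR, hm1mi, ?_⟩
    cases a1 with
    | true =>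
      simp [PsiInv] at hInv ⊢
      refine ⟨by omega, ?_⟩
      calc W ++ R ≋ (rowWord B ++ [m1]) ++ R := he_app_r R hInv.2
      _ = rowWord B ++ (m1 :: (A ++ mi :: m1 :: C')) := by simp [hdec, hCeq]
      _ ≋ rowWord B ++ ((A ++ mi :: m1 :: C') ++ [mi]) := he_app_l _ hdum
      _ = (rowWord B ++ R) ++ [mi] := by simp [hdec, hCeq]
      _ = rowWord (R :: B) ++ [mi] := by rw [rowWord_cons]
    | false =>
      simp [PsiInv] at hInv ⊢
      have hEj1 : rowWord B ++ [m1] ≋ rowWord B :=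
        hInv.2.resolve_left (by omega)
      constructor
      · rw [rowWord_cons]; exact he_app_r R hInv.1
      · refine Or.inr ?_
        calc rowWord (R :: B) ++ [mi]
            = rowWord B ++ ((A ++ mi :: m1 :: C') ++ [mi]) := by
              simp [rowWord_cons, hdec, hCeq]
        _ ≋ rowWord B ++ (m1 :: (A ++ mi :: m1 :: C')) := he_app_l _ hdum.symm
        _ = (rowWord B ++ [m1]) ++ R := by simp [hdec, hCeq]
        _ ≋ rowWord B ++ R := he_app_r _ hEj1
        _ = rowWord (R :: B) := (rowWord_cons R B).symm
  · -- not Dummy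
    have hcd : R.contains (mi - 1) = false := by
      simpa [List.elem_eq_mem] using hd
    rw [if_neg (by rw [hcd]; exact Bool.false_ne_true)]
    by_cases hdm : a1 = true ∧ m1 ∉ R
    · -- Direct replacement
      have hcond : (a1 && !R.contains m1) = true := by
        simp [hdm.1, List.elem_eq_mem, hdm.2]
      rw [if_pos hcond]
      obtain ⟨ha1, hm1R⟩ := hdm
      subst ha1
      simp [PsiInv] at hInv
      obtain ⟨hm1pos, hW⟩ := hInv
      have hC2 : ∀ y ∈ C, y < m1 := by
        intro y hy
        have h1 := hCle y hy
        have h2 : y ≠ m1 := fun e => hm1R (e ▸ hCR y hy)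
        omega
      have hrep : replaceVal R mi m1 = A ++ m1 :: C := by
        rw [hdec]
        exact replaceVal_decomp (fun y hy => by have := hA y hy; omega)
          (fun y hy => by have := hC y hy; omega)
      rw [hdec] at hRp
      refine ⟨⟨?_, ?_⟩, hmiR, hm1mi, ?_⟩
      · rw [hrep]
        exact pairwise_replace hRp (fun y hy => by have := hA y hy; omega) hC2
      · rw [hrep]
        intro x hx
        rcases List.mem_append.mp hx with h | h
        · exact hRpos x (hAR x h)
        · rcases List.mem_cons.mp h with rfl | h
          · omega
          · exact hRpos x (hCR x h)
      · simp [PsiInv]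
        refine ⟨by omega, ?_⟩
        have hfar1 : ∀ y ∈ A, Far m1 y := by
          intro y hy; have := hA y hy; left; omega
        have hfar2 : ∀ y ∈ C, Far mi y := by
          intro y hy; have := hC2 y hy; right; omega
        calc W ++ R ≋ (rowWord B ++ [m1]) ++ R := he_app_r R hW
        _ = rowWord B ++ (m1 :: (A ++ mi :: C)) := by simp [hdec]
        _ ≋ rowWord B ++ ((A ++ m1 :: C) ++ [mi]) := he_app_l _ (core_direct hfar1 hfar2)
        _ = rowWord (replaceVal R mi m1 :: B) ++ [mi] := by
            simp [rowWord_cons, hrep]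
    · -- Indirect replacement or No replacement
      have hcond : (a1 && !R.contains m1) = false := by
        rcases Bool.eq_false_or_eq_true a1 with h | h
        · have : m1 ∈ R := by
            by_contra hc; exact hdm ⟨h, hc⟩
          simp [List.elem_eq_mem, this]
        · simp [h]
      rw [if_neg (by rw [hcond]; exact Bool.false_ne_true)]
      cases hse : smallestEjectableBetween B m1 mi with
      | some x =>
        -- Indirect replacement
        have hxfacts : ejectableB B x = true ∧ m1 < x ∧ x < mi := by
          have hse' := hse
          unfold smallestEjectableBetween at hse'
          have h1 := List.min?_eq_some_iff'.mp hse'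
          have h2 := (List.mem_filter.mp h1.1).2
          simp only [Bool.and_eq_true, decide_eq_true_eq] at h2
          exact ⟨h2.1.1, h2.1.2, h2.2⟩
        obtain ⟨hEjB, hm1x, hxmi⟩ := hxfacts
        have hEj : rowWord B ++ [x] ≋ rowWord B := eject_hecke B x hB hEjB
        have hrep : replaceVal R mi x = A ++ x :: C := by
          rw [hdec]
          exact replaceVal_decomp (fun y hy => by have := hA y hy; omega)
            (fun y hy => by have := hC y hy; omega)
        have hWm1 : (m1 ∈ R ∧ W ++ R ≋ rowWord B ++ ([m1] ++ R)) ∨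
            (m1 ∉ R ∧ W ++ R ≋ rowWord B ++ R) := by
          cases a1 with
          | true =>
            simp [PsiInv] at hInv
            have hm1R : m1 ∈ R := by
              by_contra hc; exact hdm ⟨rfl, hc⟩
            exact Or.inl ⟨hm1R, by
              calc W ++ R ≋ (rowWord B ++ [m1]) ++ R := he_app_r R hInv.2
              _ = rowWord B ++ ([m1] ++ R) := by simp⟩
          | false =>
            simp [PsiInv] at hInv
            by_cases hm1R : m1 ∈ R
            · have hm1pos : 0 < m1 := hRpos m1 hm1R
              have hEj1 : rowWord B ++ [m1] ≋ rowWord B :=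
                hInv.2.resolve_left (by omega)
              refine Or.inl ⟨hm1R, ?_⟩
              calc W ++ R ≋ rowWord B ++ R := he_app_r R hInv.1
              _ ≋ (rowWord B ++ [m1]) ++ R := he_app_r R hEj1.symm
              _ = rowWord B ++ ([m1] ++ R) := by simp
            · exact Or.inr ⟨hm1R, he_app_r R hInv.1⟩
        rw [hdec] at hRp
        have hxA : ∀ y ∈ A, Far x y := by
          intro y hy; have := hA y hy; left; omega
        have hgoal : W ++ R ≋ rowWord (replaceVal R mi x :: B) ++ [mi] := by
          rcases hWm1 with ⟨hm1R, hW⟩ | ⟨hm1R, hW⟩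
          · -- m1 ∈ R
            · have hm1pos : 0 < m1 := hRpos m1 hm1R
              have hdCm1 : m1 ∈ C := by
                rw [hdec] at hm1R
                rcases List.mem_append.mp hm1R with h | h
                · have := hA _ h; omega
                · rcases List.mem_cons.mp h with h | h
                  · omega
                  · exact h
              obtain ⟨C', hCeq, hC'⟩ := head_of_max hCp hdCm1 hCle
              have hmi2 : m1 + 2 ≤ mi := by
                have : m1 ≠ mi - 1 := fun e => hd (e ▸ hm1R)
                omega
              have hmA : ∀ y ∈ A, Far m1 y := by
                intro y hy; have := hA y hy; left; omega
              have hm1mif : Far m1 mi := by left; omega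
              have hC'f : ∀ y ∈ C', Far mi y := by
                intro y hy; have := hC' y hy; right; omega
              calc W ++ R ≋ rowWord B ++ ([m1] ++ R) := hW
              _ ≋ (rowWord B ++ [x]) ++ ([m1] ++ R) := he_app_r _ hEj.symm
              _ = rowWord B ++ (x :: m1 :: (A ++ mi :: m1 :: C')) := by
                  simp [hdec, hCeq]
              _ ≋ rowWord B ++ ((A ++ x :: m1 :: C') ++ [mi]) :=
                  he_app_l _ (core_indirect hxA hmA hm1mif hC'f)
              _ = rowWord (replaceVal R mi x :: B) ++ [mi] := by
                  simp [rowWord_cons, hrep, hCeq]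
          · -- m1 ∉ R, a1 = false
            have hC2 : ∀ y ∈ C, y < m1 := by
              intro y hy
              have h1 := hCle y hy
              have h2 : y ≠ m1 := fun e => hm1R (e ▸ hCR y hy)
              omega
            have hfar2 : ∀ y ∈ C, Far mi y := by
              intro y hy; have := hC2 y hy; right; omega
            calc W ++ R ≋ rowWord B ++ R := hW
            _ ≋ (rowWord B ++ [x]) ++ R := he_app_r _ hEj.symm
            _ = rowWord B ++ (x :: (A ++ mi :: C)) := by simp [hdec]
            _ ≋ rowWord B ++ ((A ++ x :: C) ++ [mi]) :=
                he_app_l _ (core_direct hxA hfar2)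
            _ = rowWord (replaceVal R mi x :: B) ++ [mi] := by
                simp [rowWord_cons, hrep]
        refine ⟨⟨?_, ?_⟩, hmiR, hm1mi, ?_⟩
        · show (replaceVal R mi x).Pairwise (fun x y => y < x)
          rw [hrep]
          refine pairwise_replace hRp (fun y hy => by have := hA y hy; omega) ?_
          intro y hy
          have h1 := hCle y hy; omega
        · show ∀ z ∈ replaceVal R mi x, 0 < z
          rw [hrep]
          intro z hz
          rcases List.mem_append.mp hz with h | h
          · exact hRpos z (hAR z h)
          · rcases List.mem_cons.mp h with rfl | h
            · omega
            · exact hRpos z (hCR z h)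
        · show PsiInv (W ++ R) (replaceVal R mi x :: B) mi true
          simp only [PsiInv, if_true]
          exact ⟨by omega, hgoal⟩
      | none =>
        -- No replacement
        have hCfar : ∀ y ∈ C, Far mi y := by
          intro y hy
          have h1 := hC y hy
          have h2 : y ≠ mi - 1 := fun e => hd (e ▸ hCR y hy)
          right; omega
        have hEjNew : (rowWord B ++ R) ++ [mi] ≋ rowWord B ++ R := by
          calc (rowWord B ++ R) ++ [mi]
              = rowWord B ++ ((A ++ mi :: C) ++ [mi]) := by simp [hdec]
          _ ≋ rowWord B ++ (A ++ mi :: C) := he_app_l _ (core_eject hCfar)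
          _ = rowWord B ++ R := by rw [hdec]
        have hpart1 : W ++ R ≋ rowWord B ++ R := by
          cases a1 with
          | true =>
            simp [PsiInv] at hInv
            have hm1R : m1 ∈ R := by
              by_contra hc; exact hdm ⟨rfl, hc⟩
            have hdCm1 : m1 ∈ C := by
              rw [hdec] at hm1R
              rcases List.mem_append.mp hm1R with h | h
              · have := hA _ h; omega
              · rcases List.mem_cons.mp h with h | h
                · omega
                · exact h
            obtain ⟨C', hCeq, hC'⟩ := head_of_max hCp hdCm1 hCle
            have hmi2 : m1 + 2 ≤ mi := by
              have : m1 ≠ mi - 1 := fun e => hd (e ▸ hm1R)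
              omega
            have hmA : ∀ y ∈ A, Far m1 y := by
              intro y hy; have := hA y hy; left; omega
            have hm1mif : Far m1 mi := by left; omega
            calc W ++ R ≋ (rowWord B ++ [m1]) ++ R := he_app_r R hInv.2
            _ = rowWord B ++ (m1 :: (A ++ mi :: m1 :: C')) := by simp [hdec, hCeq]
            _ ≋ rowWord B ++ (A ++ mi :: m1 :: C') :=
                he_app_l _ (core_absorb hmA hm1mif)
            _ = rowWord B ++ R := by simp [hdec, hCeq]
          | false =>
            simp [PsiInv] at hInv
            exact he_app_r R hInv.1
        refine ⟨⟨hRp, hRpos⟩, hmiR, hm1mi, ?_⟩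
        simp [PsiInv]
        rw [rowWord_cons]
        exact ⟨hpart1, Or.inr hEjNew⟩

end Step

section Rows

local infix:50 " ≋ " => HeckeEquiv

lemma rows_lemma (L : List (List ℕ)) :
    ∀ (B : List (List ℕ)) (m : ℕ) (a : Bool) (W : List ℕ),
    (∀ R ∈ L, R.Pairwise (fun x y => y < x) ∧ ∀ x ∈ R, 0 < x) →
    L.Chain' (fun R S => S.length ≤ R.length ∧
      ∀ j < S.length, S.getD j 0 < R.getD j 0) →
    GoodRows B →
    (∀ h : L ≠ [], ∃ y ∈ L.getLast h, m < y) →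
    PsiInv W B m a →
    GoodRows (psiRows L B m a).1 ∧
    PsiInv (W ++ rowWord L) (psiRows L B m a).1 (psiRows L B m a).2.1
      (psiRows L B m a).2.2 ∧
    ((L = [] ∧ psiRows L B m a = (B, m, a)) ∨
      (L ≠ [] ∧ (psiRows L B m a).2.1 ∈ L.headI ∧ m < (psiRows L B m a).2.1)) := by
  induction L with
  | nil =>
    intro B m a W hrows hch hB hlast hInv
    refine ⟨hB, ?_, Or.inl ⟨rfl, rfl⟩⟩
    have he : W ++ rowWord [] = W := by simp [rowWord]
    rw [he]
    exact hInv
  | cons R rest ih =>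
    intro B m a W hrows hch hB hlast hInv
    have hrest := ih B m a W (fun S hS => hrows S (by simp [hS])) hch.tail hB
      (fun h => by
        have h2 := List.getLast_cons (a := R) h
        exact h2 ▸ hlast (by simp)) hInv
    obtain ⟨hGr, hInvr, hdisj⟩ := hrest
    have hmR : ∃ y ∈ R, (psiRows rest B m a).2.1 < y := by
      rcases hdisj with ⟨hnil, heq⟩ | ⟨hL, hmem, hlt⟩
      · subst hnil
        have h3 := hlast (by simp)
        rw [heq]
        simpa using h3
      · cases rest with
        | nil => simp at hL
        | cons S rest' =>
          have hrel := (List.isChain_cons_cons.mp hch).1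
          have hmem' : (psiRows (S :: rest') B m a).2.1 ∈ S := by simpa using hmem
          obtain ⟨j, hj, hjeq⟩ := List.getElem_of_mem hmem'
          refine ⟨R.getD j 0, ?_, ?_⟩
          · have hjR : j < R.length := lt_of_lt_of_le hj hrel.1
            rw [List.getD_eq_getElem R 0 hjR]
            exact List.getElem_mem hjR
          · have h4 := hrel.2 j hj
            rw [List.getD_eq_getElem S 0 hj, hjeq] at h4
            exact h4
    have hstep := step_lemma (hrows R (by simp)).1 (hrows R (by simp)).2 hGr hmR hInvr
    have hm_le : m ≤ (psiRows rest B m a).2.1 := by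
      rcases hdisj with ⟨hnil, heq⟩ | ⟨hL, hmem, hlt⟩
      · rw [heq]
      · exact le_of_lt hlt
    refine ⟨?_, ?_, Or.inr ⟨by simp, ?_, ?_⟩⟩
    · show GoodRows ((psiRowStep R (psiRows rest B m a).1 (psiRows rest B m a).2.1
        (psiRows rest B m a).2.2).1 :: (psiRows rest B m a).1)
      intro S hS
      rcases List.mem_cons.mp hS with rfl | hS'
      · exact hstep.1
      · exact hGr S hS'
    · show PsiInv (W ++ rowWord (R :: rest))
        ((psiRowStep R (psiRows rest B m a).1 (psiRows rest B m a).2.1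
          (psiRows rest B m a).2.2).1 :: (psiRows rest B m a).1)
        (psiRowStep R (psiRows rest B m a).1 (psiRows rest B m a).2.1
          (psiRows rest B m a).2.2).2.1
        (psiRowStep R (psiRows rest B m a).1 (psiRows rest B m a).2.1
          (psiRows rest B m a).2.2).2.2
      have he : W ++ rowWord (R :: rest) = (W ++ rowWord rest) ++ R := by
        simp [rowWord_cons]
      rw [he]
      exact hstep.2.2.2
    · show (psiRowStep R (psiRows rest B m a).1 (psiRows rest B m a).2.1
        (psiRows rest B m a).2.2).2.1 ∈ R
      exact hstep.2.1
    · show m < (psiRowStep R (psiRows rest B m a).1 (psiRows rest B m a).2.1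
        (psiRows rest B m a).2.2).2.1
      exact lt_of_le_of_lt hm_le hstep.2.2.1

end Rows


section Final

local infix:50 " ≋ " => HeckeEquiv

/-- Ψ respects Hecke equivalence: if `Ψ(P,(r,c),α) = (P',m)` then
`row(P) ≡_H row(P')·m`. -/
theorem statement7 (P : List (List ℕ)) (r c : ℕ) (α : Bool)
    (hP : IsDecreasingTableau P) (hrc : IsRemovable P r c) :
    HeckeEquiv (rowWord P) (rowWord (psi P r α).1 ++ [(psi P r α).2]) := by
  obtain ⟨hne, hpos, hrows, hchain⟩ := hP
  obtain ⟨hr1, hrlen, hc1, hlen, hlt⟩ := hrc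
  have hPrs : ∀ R ∈ P, R.Pairwise (fun x y => y < x) ∧ ∀ x ∈ R, 0 < x :=
    fun R hR => ⟨List.isChain_iff_pairwise.mp (hrows R hR), hpos R hR⟩
  have hr1' : r - 1 < P.length := by omega
  have hRowr : RowOf P r = P[r - 1] := by
    simp only [RowOf]
    exact List.getD_eq_getElem P [] hr1'
  have hrowP : P[r - 1] ∈ P := List.getElem_mem hr1'
  have hpsi : psi P r α =
      ((psiRows (psiUpper P r α) (psiBase P r α) (psiM P r α) α).1,
       (psiRows (psiUpper P r α) (psiBase P r α) (psiM P r α) α).2.1) := by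
    simp [psi, psiStage]
  rw [hpsi]
  have hGdrop : GoodRows (P.drop r) := fun R hR => hPrs R (List.mem_of_mem_drop hR)
  cases α with
  | false =>
    have hU : psiUpper P r false = P.take r := by simp [psiUpper]
    have hB : psiBase P r false = P.drop r := by simp [psiBase]
    have hM : psiM P r false = 0 := by simp [psiM]
    rw [hU, hB, hM]
    have hInv : PsiInv (rowWord (P.drop r)) (P.drop r) 0 false := by
      simp only [PsiInv, if_false, Bool.false_eq_true]
      exact ⟨.refl _, Or.inl (by simp)⟩
    have hout := rows_lemma (P.take r) (P.drop r) 0 false (rowWord (P.drop r))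
      (fun R hR => hPrs R (List.mem_of_mem_take hR)) (hchain.take r) hGdrop
      (fun h => by
        have hmemP : (P.take r).getLast h ∈ P :=
          List.mem_of_mem_take (List.getLast_mem h)
        obtain ⟨y, hy⟩ := List.exists_mem_of_ne_nil _ (hne _ hmemP)
        exact ⟨y, hy, hpos _ hmemP y hy⟩) hInv
    obtain ⟨hG, hInvOut, hdisj⟩ := hout
    have htk : P.take r ≠ [] := by
      intro h
      have h2 : (P.take r).length = 0 := by rw [h]; rfl
      rw [List.length_take] at h2
      omega
    have hWP : rowWord P = rowWord (P.drop r) ++ rowWord (P.take r) := by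
      conv_lhs => rw [← List.take_append_drop r P]
      rw [rowWord_append]
    rcases hdisj with ⟨hnil, _⟩ | ⟨_, _, hmpos⟩
    · exact absurd hnil htk
    cases hflag : (psiRows (P.take r) (P.drop r) 0 false).2.2 with
    | true =>
      rw [hflag] at hInvOut
      simp only [PsiInv, if_true] at hInvOut
      rw [hWP]
      exact hInvOut.2
    | false =>
      rw [hflag] at hInvOut
      simp only [PsiInv, if_false, Bool.false_eq_true] at hInvOut
      have hEj := hInvOut.2.resolve_left (by omega)
      rw [hWP]
      exact hInvOut.1.trans hEj.symm
  | true =>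
    have hrne : RowOf P r ≠ [] := by
      intro h
      have hc0 : c = 0 := by rw [← hlen, h]; rfl
      omega
    have hU : psiUpper P r true = P.take (r - 1) := by simp [psiUpper]
    have hM : psiM P r true = (RowOf P r).getLast hrne := by
      simp [psiM, List.getLast?_eq_getLast hrne]
    have hm0mem : (RowOf P r).getLast hrne ∈ RowOf P r := List.getLast_mem hrne
    have hm0pos : 0 < (RowOf P r).getLast hrne :=
      hpos _ (hRowr ▸ hrowP) _ hm0mem
    have hWB : rowWord (psiBase P r true) ++ [(RowOf P r).getLast hrne] =
        rowWord (P.drop r) ++ RowOf P r := by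
      by_cases hdl : (RowOf P r).dropLast = []
      · have hrowEq : RowOf P r = [(RowOf P r).getLast hrne] := by
          conv_lhs => rw [← List.dropLast_append_getLast hrne]
          rw [hdl]
          simp
        rw [psiBase, if_pos rfl, if_pos hdl]
        conv_rhs => rw [hrowEq]
      · rw [psiBase, if_pos rfl, if_neg hdl, rowWord_cons]
        rw [List.append_assoc, List.dropLast_append_getLast hrne]
    have hGB : GoodRows (psiBase P r true) := by
      rw [psiBase, if_pos rfl]
      have hgood : ((RowOf P r).dropLast.Pairwise (fun x y => y < x)) ∧
          ∀ x ∈ (RowOf P r).dropLast, 0 < x := by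
        have h1 := hPrs _ (hRowr ▸ hrowP)
        exact ⟨List.Pairwise.sublist (List.dropLast_sublist _) h1.1,
          fun x hx => h1.2 x ((List.dropLast_sublist _).subset hx)⟩
      by_cases hdl : (RowOf P r).dropLast = []
      · rw [if_pos hdl]; exact hGdrop
      · rw [if_neg hdl]
        intro R hR
        rcases List.mem_cons.mp hR with rfl | hR'
        · exact hgood
        · exact hGdrop R hR'
    have hInv : PsiInv (rowWord (P.drop r) ++ RowOf P r) (psiBase P r true)
        ((RowOf P r).getLast hrne) true := by
      simp only [PsiInv, if_true]
      exact ⟨hm0pos, hWB ▸ HeckeEquiv.refl _⟩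
    have hlast : ∀ h : P.take (r - 1) ≠ [],
        ∃ y ∈ (P.take (r - 1)).getLast h, (RowOf P r).getLast hrne < y := by
      intro h
      have hr2 : 2 ≤ r := by
        by_contra hc
        have hr10 : r - 1 = 0 := by omega
        rw [hr10] at h
        simp at h
      have hlentk : (P.take (r - 1)).length = r - 1 := by
        rw [List.length_take]
        omega
      have hgl : (P.take (r - 1)).getLast h = P[r - 2] := by
        rw [List.getLast_eq_getElem]
        rw [List.getElem_take]
        congr 1
        rw [hlentk]
        omega
      have hrel := List.isChain_iff_getElem.mp hchain (r - 2) (by omega)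
      simp only [show r - 2 + 1 = r - 1 from by omega] at hrel
      have hclen : P[r - 1].length = c := by rw [← hRowr]; exact hlen
      have hc1' : c - 1 < P[r - 1].length := by omega
      have hc2' : c - 1 < P[r - 2].length := by
        have := hrel.1
        omega
      have hm0idx : P[r - 1].getD (c - 1) 0 = (RowOf P r).getLast hrne := by
        rw [List.getD_eq_getElem _ _ hc1']
        simp only [hRowr]
        rw [List.getLast_eq_getElem]
        congr 1
        omega
      rw [hgl]
      refine ⟨P[r - 2].getD (c - 1) 0, ?_, ?_⟩
      · rw [List.getD_eq_getElem _ _ hc2']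
        exact List.getElem_mem hc2'
      · have h7 := hrel.2 (c - 1) (by omega)
        rw [hm0idx] at h7
        exact h7
    rw [hU, hM]
    have hout := rows_lemma (P.take (r - 1)) (psiBase P r true)
      ((RowOf P r).getLast hrne) true (rowWord (P.drop r) ++ RowOf P r)
      (fun R hR => hPrs R (List.mem_of_mem_take hR)) (hchain.take (r - 1)) hGB
      hlast hInv
    obtain ⟨hG, hInvOut, hdisj⟩ := hout
    have hWP : rowWord P =
        (rowWord (P.drop r) ++ RowOf P r) ++ rowWord (P.take (r - 1)) := by
      conv_lhs => rw [← List.take_append_drop (r - 1) P]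
      rw [rowWord_append]
      have hdropstep : P.drop (r - 1) = P[r - 1] :: P.drop r := by
        have h5 := List.drop_eq_getElem_cons hr1'
        rw [show r - 1 + 1 = r from by omega] at h5
        exact h5
      rw [hdropstep, rowWord_cons, hRowr]
    rw [hWP]
    cases hflag : (psiRows (P.take (r - 1)) (psiBase P r true)
        ((RowOf P r).getLast hrne) true).2.2 with
    | true =>
      rw [hflag] at hInvOut
      simp only [PsiInv, if_true] at hInvOut
      exact hInvOut.2
    | false =>
      rw [hflag] at hInvOut
      simp only [PsiInv, if_false, Bool.false_eq_true] at hInvOut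
      rcases hdisj with ⟨hnil, heq⟩ | ⟨_, _, hmlt⟩
      · rw [heq] at hflag
        simp at hflag
      · have hEj := hInvOut.2.resolve_left (by omega)
        exact hInvOut.1.trans hEj.symm

end Final
end
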